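/- arXiv:1802.01260 — 7 statements merged into one kernel-verified Lean document; each statement's English description precedes it below -/
import Mathlib

section
/- For every positive integer n, ∑_{k=1}^{n} (1 - q^{2k-n-1}) · q^{-C(n-2k+1,2)} / ([2k]^2 · binom_{q^2}(n,k)^2) = 0, i.e., the k-th and (n+1-k)-th summands cancel each other. -/
open Polynomial Finset

noncomputable def q : RatFunc ℚ := RatFunc.X

/-- `qpoch a b m = (a;b)_m = ∏_{j=0}^{m-1} (1 - a b^j)`. -/
noncomputable def qpoch (a b : RatFunc ℚ) (m : ℕ) : RatFunc ℚ :=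
  ∏ j ∈ Finset.range m, (1 - a * b ^ j)

/-- The q-integer `[m] = (1-q^m)/(1-q)` for any integer `m`. -/
noncomputable def qint (m : ℤ) : RatFunc ℚ := (1 - q ^ m) / (1 - q)

/-- Gaussian binomial coefficient in base `b`. -/
noncomputable def qbin (b : RatFunc ℚ) (M N : ℕ) : RatFunc ℚ :=
  if N ≤ M then qpoch b b M / (qpoch b b N * qpoch b b (M - N)) else 0

/-- `C2 a = a(a-1)/2`. -/
def C2 (a : ℤ) : ℤ := a * (a - 1) / 2

/-- The polynomial `[n] = 1 + q + ... + q^{n-1}` in `ℚ[q]`. -/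
noncomputable def qnPoly (n : ℕ) : Polynomial ℚ := ∑ i ∈ Finset.range n, X ^ i

/-- Congruence of rational functions modulo a polynomial: the reduced numerator of the
difference is divisible by `P` and the reduced denominator is coprime to `P`. -/
def congrMod (x y : RatFunc ℚ) (P : Polynomial ℚ) : Prop :=
  P ∣ (x - y).num ∧ IsCoprime ((x - y).denom) P

lemma q_ne_zero : q ≠ 0 := RatFunc.X_ne_zero

lemma q_pow_ne_one (m : ℕ) (hm : 0 < m) : q ^ m ≠ 1 := by
  intro h
  have h2 : algebraMap (Polynomial ℚ) (RatFunc ℚ) (X ^ m) =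
      algebraMap (Polynomial ℚ) (RatFunc ℚ) 1 := by
    simpa [q, map_pow, RatFunc.algebraMap_X] using h
  have h3 : (X : Polynomial ℚ) ^ m = 1 := RatFunc.algebraMap_injective ℚ h2
  have := congrArg natDegree h3
  simp [natDegree_X_pow] at this
  omega

lemma one_sub_q_pow_ne (m : ℕ) (hm : 0 < m) : (1 : RatFunc ℚ) - q ^ m ≠ 0 := by
  rw [sub_ne_zero]
  exact fun h => q_pow_ne_one m hm h.symm

lemma one_sub_q_ne : (1 : RatFunc ℚ) - q ≠ 0 := by
  simpa using one_sub_q_pow_ne 1 one_pos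

lemma qpoch2_ne (m : ℕ) : qpoch (q ^ 2) (q ^ 2) m ≠ 0 := by
  rw [qpoch]
  apply Finset.prod_ne_zero_iff.mpr
  intro j _
  have : q ^ 2 * (q ^ 2) ^ j = q ^ (2 * j + 2) := by ring
  rw [this]
  exact one_sub_q_pow_ne _ (by omega)

lemma qpoch2_succ (k : ℕ) (hk : 1 ≤ k) :
    qpoch (q ^ 2) (q ^ 2) k = qpoch (q ^ 2) (q ^ 2) (k - 1) * (1 - q ^ (2 * k)) := by
  obtain ⟨k, rfl⟩ : ∃ m, k = m + 1 := ⟨k - 1, by omega⟩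
  rw [qpoch, qpoch, Finset.prod_range_succ, Nat.add_sub_cancel]
  congr 1
  rw [pow_mul]
  ring

/-- value of `[2k] * qbin` in symmetric form -/
lemma Dval (n k : ℕ) (h1 : 1 ≤ k) (h2 : k ≤ n) :
    qint (2 * (k : ℤ)) * qbin (q ^ 2) n k =
      qpoch (q ^ 2) (q ^ 2) n /
        ((1 - q) * qpoch (q ^ 2) (q ^ 2) (k - 1) * qpoch (q ^ 2) (q ^ 2) (n - k)) := by
  have hz : q ^ (2 * (k : ℤ)) = q ^ (2 * k) := by
    rw [show 2 * (k : ℤ) = ((2 * k : ℕ) : ℤ) by push_cast; ring, zpow_natCast]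
  rw [qint, qbin, if_pos h2, hz, qpoch2_succ k h1]
  have h1q := one_sub_q_ne
  have hP1 := qpoch2_ne (k - 1)
  have hP2 := qpoch2_ne (n - k)
  have hk := one_sub_q_pow_ne (2 * k) (by omega)
  field_simp

lemma Dsymm (n k : ℕ) (h1 : 1 ≤ k) (h2 : k ≤ n) :
    qint (2 * (k : ℤ)) * qbin (q ^ 2) n k =
      qint (2 * ((n + 1 - k : ℕ) : ℤ)) * qbin (q ^ 2) n (n + 1 - k) := by
  rw [Dval n k h1 h2, Dval n (n + 1 - k) (by omega) (by omega)]
  rw [show n + 1 - k - 1 = n - k by omega, show n - (n + 1 - k) = k - 1 by omega]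
  ring_nf

lemma C2_neg (b : ℤ) : C2 (-b) = C2 b + b := by
  unfold C2
  have h : -b * (-b - 1) = b * (b - 1) + b * 2 := by ring
  rw [h, Int.add_mul_ediv_right _ _ two_ne_zero]

lemma Nsum (b : ℤ) :
    (1 - q ^ b) * q ^ (-(C2 (-b))) + (1 - q ^ (-b)) * q ^ (-(C2 b)) = 0 := by
  have hq := q_ne_zero
  rw [C2_neg]
  have e1 : q ^ b * q ^ (-(C2 b + b)) = q ^ (-(C2 b)) := by
    rw [← zpow_add₀ hq]; congr 1; ring
  have e2 : q ^ (-b) * q ^ (-(C2 b)) = q ^ (-(C2 b + b)) := by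
    rw [← zpow_add₀ hq]; congr 1; ring
  linear_combination -e1 - e2

theorem q_symmetry_cancel (n : ℕ) (hn : 0 < n) :
    ∑ k ∈ Finset.Icc 1 n,
        (1 - q ^ (2 * (k : ℤ) - n - 1)) * q ^ (-(C2 ((n : ℤ) - 2 * k + 1))) /
          (qint (2 * (k : ℤ)) ^ 2 * qbin (q ^ 2) n k ^ 2) = 0 := by
  apply Finset.sum_involution (fun k _ => n + 1 - k)
  · intro a ha
    simp only [Finset.mem_Icc] at ha
    obtain ⟨ha1, ha2⟩ := ha
    have hcast : ((n + 1 - a : ℕ) : ℤ) = (n : ℤ) + 1 - a := by omega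
    have hD : qint (2 * ((n + 1 - a : ℕ) : ℤ)) ^ 2 * qbin (q ^ 2) n (n + 1 - a) ^ 2 =
        qint (2 * (a : ℤ)) ^ 2 * qbin (q ^ 2) n a ^ 2 := by
      rw [← mul_pow, ← mul_pow, ← Dsymm n a ha1 ha2]
    rw [hD, ← add_div, _root_.div_eq_zero_iff]
    left
    set b : ℤ := 2 * (a : ℤ) - n - 1 with hb
    have h1 : 2 * ((n + 1 - a : ℕ) : ℤ) - n - 1 = -b := by omega
    have h2 : (n : ℤ) - 2 * ((n + 1 - a : ℕ) : ℤ) + 1 = b := by omega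
    have h3 : (n : ℤ) - 2 * (a : ℤ) + 1 = -b := by omega
    rw [h1, h2, h3]
    exact Nsum b
  · intro a ha h hfix
    simp only [Finset.mem_Icc] at ha
    apply h
    have hb : 2 * (a : ℤ) - n - 1 = 0 := by omega
    rw [hb]
    simp
  · intro a ha
    simp only [Finset.mem_Icc] at ha ⊢
    omega
  · intro a ha
    simp only [Finset.mem_Icc] at ha
    omega
end

section
/- Let n be a positive odd integer. Then for each k with 1 ≤ k ≤ (n-1)/2, the rational function [n] · binom_q(2n-2k, n-1) · (q;q^2)_n (q;q^2)_{n-k} / ((q;q)_n (q^2;q^2)_{n-k}) is congruent to 0 modulo [n]·Φ_n(q)^2. -/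
open Polynomial Finset

/-! ### Auxiliary counting lemmas -/

lemma cnt1_eq (d m : ℕ) : ((range m).filter (fun j => d ∣ (j+1))).card = m / d := by
  rw [← Nat.Ioc_filter_dvd_card_eq_div]
  apply Finset.card_nbij (fun j => j + 1)
  · intro a ha; simp at ha ⊢; exact ⟨by omega, ha.2⟩
  · intro a _ b _ h; simpa using h
  · intro x hx; simp at hx ⊢
    refine ⟨x - 1, ⟨by omega, ?_⟩, by omega⟩
    have hx1 : x - 1 + 1 = x := by omega
    rw [hx1]; exact hx.2

lemma cntO_eq (d m : ℕ) (hd : Odd d) :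
    ((range m).filter (fun j => d ∣ (2*j+1))).card = 2*m/d - m/d := by
  have hcop : Nat.Coprime d 2 := hd.coprime_two_right
  have key : ((range m).filter (fun j => d ∣ (2*j+1))).card
      = (((Ioc 0 (2*m)).filter (fun x => d ∣ x)).filter (fun x => ¬ (2*d) ∣ x)).card := by
    apply Finset.card_nbij (fun j => 2*j + 1)
    · intro a ha; simp at ha ⊢
      refine ⟨⟨by omega, ha.2⟩, ?_⟩
      intro hcon
      have : (2:ℕ) ∣ 2*a+1 := dvd_trans ⟨d, by ring⟩ hcon
      omega
    · intro a _ b _ h; simp at h; omega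
    · intro x hx
      simp only [mem_filter, mem_Ioc, Set.mem_image, mem_coe, mem_range] at hx ⊢
      obtain ⟨⟨⟨hx0, hxm⟩, hdx⟩, h2dx⟩ := hx
      have hxodd : Odd x := by
        rcases Nat.even_or_odd x with he | ho
        · exfalso; apply h2dx
          obtain ⟨y, hy⟩ := he
          have hdy : d ∣ y := Nat.Coprime.dvd_of_dvd_mul_left hcop
            (by rw [two_mul]; rwa [hy] at hdx)
          obtain ⟨z, hz⟩ := hdy
          exact ⟨z, by rw [hy, hz]; ring⟩
        · exact ho
      obtain ⟨j, hj⟩ := hxodd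
      refine ⟨j, ⟨⟨by omega, ?_⟩, show 2*j+1 = x by omega⟩⟩
      have : 2*j+1 = x := by omega
      rw [this]; exact hdx
  rw [key]
  have hsplit := Finset.card_filter_add_card_filter_not
    (s := (Ioc 0 (2*m)).filter (fun x => d ∣ x)) (p := fun x => (2*d) ∣ x)
  have h1 : ((Ioc 0 (2*m)).filter (fun x => d ∣ x)).card = 2*m/d :=
    Nat.Ioc_filter_dvd_card_eq_div _ _
  have h2 : (((Ioc 0 (2*m)).filter (fun x => d ∣ x)).filter (fun x => (2*d) ∣ x)).card = m/d := by
    rw [Finset.filter_filter]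
    have heq : ((Ioc 0 (2*m)).filter (fun x => d ∣ x ∧ (2*d) ∣ x))
        = ((Ioc 0 (2*m)).filter (fun x => (2*d) ∣ x)) := by
      apply Finset.filter_congr; intro x _
      constructor
      · exact fun h => h.2
      · exact fun h => ⟨dvd_trans ⟨2, by ring⟩ h, h⟩
    rw [heq, Nat.Ioc_filter_dvd_card_eq_div]
    exact Nat.mul_div_mul_left m d (by norm_num)
  omega

lemma cntE_eq (d m : ℕ) (hd : Odd d) :
    ((range m).filter (fun j => d ∣ (2*j+2))).card = m / d := by
  rw [← cnt1_eq d m]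
  apply Finset.card_bij (fun j _ => j)
  · intro a ha; simp at ha ⊢
    exact ⟨ha.1, hd.coprime_two_right.dvd_of_dvd_mul_left
      (by rw [two_mul]; convert ha.2 using 1; ring)⟩
  · intro a _ b _ h; exact h
  · intro x hx; simp at hx ⊢
    refine ⟨hx.1, ?_⟩
    have h2 := hx.2.mul_left 2
    rwa [Nat.mul_add, Nat.mul_one] at h2

/-! ### Factorization of products of `1 - X^m` into cyclotomics -/

lemma prod_one_sub_X_pow (D m : ℕ) (f : ℕ → ℕ) (hf : ∀ j ∈ range m, 0 < f j ∧ f j ≤ D) :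
    ∏ j ∈ range m, (1 - (X:ℚ[X])^(f j)) =
      (-1)^m * ∏ d ∈ Icc 1 D, cyclotomic d ℚ ^ ((range m).filter (fun j => d ∣ f j)).card := by
  have step1 : ∏ j ∈ range m, (1 - (X:ℚ[X])^(f j))
      = (-1)^m * ∏ j ∈ range m, ((X:ℚ[X])^(f j) - 1) := by
    rw [show ((-1 : ℚ[X]))^m = ∏ _j ∈ range m, (-1 : ℚ[X]) by
      rw [Finset.prod_const, Finset.card_range], ← Finset.prod_mul_distrib]
    exact Finset.prod_congr rfl fun j _ => by ring
  rw [step1]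
  congr 1
  have step2 : ∀ j ∈ range m, ((X:ℚ[X])^(f j) - 1)
      = ∏ d ∈ (Icc 1 D).filter (· ∣ f j), cyclotomic d ℚ := by
    intro j hj
    rw [← prod_cyclotomic_eq_X_pow_sub_one (hf j hj).1]
    apply Finset.prod_congr _ (fun _ _ => rfl)
    ext d
    simp only [Nat.mem_divisors, mem_filter, mem_Icc]
    constructor
    · rintro ⟨hdvd, hne⟩
      exact ⟨⟨Nat.pos_of_dvd_of_pos hdvd (hf j hj).1,
        le_trans (Nat.le_of_dvd (hf j hj).1 hdvd) (hf j hj).2⟩, hdvd⟩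
    · rintro ⟨_, hdvd⟩
      exact ⟨hdvd, by have := (hf j hj).1; omega⟩
  rw [Finset.prod_congr rfl step2]
  have step3 : ∀ j ∈ range m, ∏ d ∈ (Icc 1 D).filter (· ∣ f j), cyclotomic d ℚ
      = ∏ d ∈ Icc 1 D, (if d ∣ f j then cyclotomic d ℚ else 1) := fun j _ =>
    Finset.prod_filter _ _
  rw [Finset.prod_congr rfl step3, Finset.prod_comm]
  apply Finset.prod_congr rfl
  intro d _
  rw [Finset.prod_ite, Finset.prod_const, Finset.prod_const_one, mul_one]

lemma prod_ne (m : ℕ) (f : ℕ → ℕ) (hf : ∀ j ∈ range m, 0 < f j) :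
    (∏ j ∈ range m, (1 - (X:ℚ[X])^(f j))) ≠ 0 := by
  rw [Finset.prod_ne_zero_iff]
  intro j hj h
  have := congrArg (Polynomial.eval 0) h
  simp [zero_pow (by have := hf j hj; omega : f j ≠ 0)] at this

/-! ### Exponent functions -/

def rCnt (n d : ℕ) : ℕ := (if d ∣ n ∧ d ≠ 1 then 1 else 0) + (if d = n then 2 else 0)

noncomputable def aC (n k d : ℕ) : ℕ :=
  (if d ∣ n then 1 else 0)
  + ((range (2*n-2*k)).filter (fun j => d ∣ (j+1))).card
  + ((range n).filter (fun j => d ∣ (2*j+1))).card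
  + ((range (n-k)).filter (fun j => d ∣ (2*j+1))).card

noncomputable def cC (n k d : ℕ) : ℕ :=
  (if d ∣ 1 then 1 else 0)
  + ((range (n-1)).filter (fun j => d ∣ (j+1))).card
  + ((range (2*n-2*k-(n-1))).filter (fun j => d ∣ (j+1))).card
  + ((range n).filter (fun j => d ∣ (j+1))).card
  + ((range (n-k)).filter (fun j => d ∣ (2*j+2))).card

/-! ### The key inequality -/

lemma key_ineq (n k d : ℕ) (hk1 : 1 ≤ k) (hk2 : 2*k ≤ n - 1) (hn : 3 ≤ n)
    (hd : d ∣ n) (hd1 : 1 ≤ d) :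
    ((if d ∣ 1 then 1 else 0) + (n-1)/d + (2*n-2*k-(n-1))/d + n/d + (n-k)/d)
      + ((if d ∣ n ∧ d ≠ 1 then 1 else 0) + (if d = n then 2 else 0))
    ≤ (if d ∣ n then 1 else 0) + (2*n-2*k)/d + (2*n/d - n/d) + (2*(n-k)/d - (n-k)/d) := by
  have hdpos : 0 < d := hd1
  have superadd : ∀ a b : ℕ, a/d + b/d ≤ (a+b)/d := fun a b => by
    rw [Nat.le_div_iff_mul_le hdpos]
    calc (a/d + b/d) * d = a/d*d + b/d*d := by ring
    _ ≤ a + b := Nat.add_le_add (Nat.div_mul_le_self _ _) (Nat.div_mul_le_self _ _)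
  rcases eq_or_ne d 1 with rfl | hne1
  · have h2 : ¬ ((1:ℕ) = n) := by omega
    simp only [Nat.div_one, one_dvd, if_true, ne_eq, not_true_eq_false, and_false, if_false,
      h2]
    omega
  rcases eq_or_ne d n with heq | hnen
  · subst heq
    have e1 : (d-1)/d = 0 := Nat.div_eq_of_lt (by omega)
    have e2 : (2*d-2*k-(d-1))/d = 0 := Nat.div_eq_of_lt (by omega)
    have e3 : d/d = 1 := Nat.div_self (by omega)
    have e4 : (d-k)/d = 0 := Nat.div_eq_of_lt (by omega)
    have e5 : (2*d-2*k)/d = 1 := Nat.div_eq_of_lt_le (by omega) (by omega)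
    have e6 : 2*d/d = 2 := by rw [Nat.mul_div_cancel _ (show 0 < d by omega)]
    have e7 : 2*(d-k)/d = 1 := Nat.div_eq_of_lt_le (by omega) (by omega)
    have h1 : ¬ (d ∣ 1) := by intro h; have := Nat.le_of_dvd one_pos h; omega
    simp only [e1, e2, e3, e4, e5, e6, e7, dvd_refl, if_true, h1, if_false, hne1, ne_eq,
      not_false_eq_true, and_true]
    omega
  obtain ⟨t, ht⟩ := hd
  have hdn : d < n := lt_of_le_of_ne (Nat.le_of_dvd (by omega) ⟨t, ht⟩) hnen
  have ht1 : 1 ≤ t := by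
    rcases Nat.eq_zero_or_pos t with rfl | h
    · simp at ht; omega
    · exact h
  have f1 : n/d = t := by rw [ht, Nat.mul_div_cancel_left _ hdpos]
  have f2 : 2*n/d = 2*t := by
    rw [show 2*n = d*(2*t) by rw [ht]; ring, Nat.mul_div_cancel_left _ hdpos]
  have f3 : (n-1)/d = t - 1 := by
    have g1 : (t-1)*d = d*t - d := by rw [Nat.sub_one_mul, mul_comm]
    have g2 : (t-1+1)*d = d*t := by rw [show t-1+1 = t by omega, mul_comm]
    exact Nat.div_eq_of_lt_le (by omega) (by omega)
  have f4 : (2*n-2*k-(n-1))/d + (n-1)/d ≤ (2*n-2*k)/d := by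
    have := superadd (2*n-2*k-(n-1)) (n-1)
    rwa [show 2*n-2*k-(n-1)+(n-1) = 2*n-2*k by omega] at this
  have f5 : (n-k)/d + (n-k)/d ≤ (2*(n-k))/d := by
    have := superadd (n-k) (n-k)
    rwa [show (n-k)+(n-k) = 2*(n-k) by omega] at this
  have f6 : (n-k)/d ≤ 2*(n-k)/d := Nat.div_le_div_right (by omega)
  have h1 : ¬ (d ∣ 1) := by intro h; have := Nat.le_of_dvd one_pos h; omega
  simp only [h1, if_false, hnen, hne1, ne_eq, not_false_eq_true, and_true,
    if_pos (⟨t, ht⟩ : d ∣ n)]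
  omega

/-! ### `[n]·Φ_n²` as a cyclotomic product -/

lemma qnPoly_eq (n : ℕ) (hn : 3 ≤ n) :
    qnPoly n = ∏ d ∈ (Icc 1 (2*n)).filter (fun d => d ∣ n ∧ d ≠ 1), cyclotomic d ℚ := by
  have hset : (Icc 1 (2*n)).filter (fun d => d ∣ n ∧ d ≠ 1) = n.divisors.erase 1 := by
    ext d
    simp only [mem_filter, mem_Icc, mem_erase, Nat.mem_divisors]
    constructor
    · rintro ⟨⟨h1, h2⟩, hdvd, hne⟩; exact ⟨hne, hdvd, by omega⟩
    · rintro ⟨hne, hdvd, hn0⟩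
      have := Nat.le_of_dvd (by omega) hdvd
      exact ⟨⟨Nat.pos_of_dvd_of_pos hdvd (by omega), by omega⟩, hdvd, hne⟩
  rw [hset]
  have h1mem : 1 ∈ n.divisors := Nat.one_mem_divisors.mpr (by omega)
  have hfull : ∏ d ∈ n.divisors, cyclotomic d ℚ = X^n - 1 :=
    prod_cyclotomic_eq_X_pow_sub_one (by omega) ℚ
  rw [← Finset.insert_erase h1mem, Finset.prod_insert (Finset.notMem_erase _ _),
    cyclotomic_one] at hfull
  have hgeom : qnPoly n * (X - 1) = X^n - 1 := by
    rw [qnPoly]; exact geom_sum_mul X n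
  have hx1 : (X - 1 : ℚ[X]) ≠ 0 := by
    intro h
    have := congrArg (Polynomial.eval 0) h
    simp at this
  apply mul_left_cancel₀ hx1
  rw [← hfull, mul_comm (qnPoly n) (X - 1)] at hgeom
  rw [← hgeom, mul_comm]

lemma P_eq (n : ℕ) (hn : 3 ≤ n) :
    qnPoly n * cyclotomic n ℚ ^ 2 = ∏ d ∈ Icc 1 (2*n), cyclotomic d ℚ ^ rCnt n d := by
  have hsplit : ∀ d ∈ Icc 1 (2*n), cyclotomic d ℚ ^ rCnt n d
      = (if d ∣ n ∧ d ≠ 1 then cyclotomic d ℚ else 1)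
        * (if d = n then cyclotomic d ℚ ^ 2 else 1) := by
    intro d _
    rw [rCnt, pow_add]
    congr 1
    · split <;> simp
    · split <;> simp
  rw [Finset.prod_congr rfl hsplit, Finset.prod_mul_distrib]
  congr 1
  · rw [← Finset.prod_filter, ← qnPoly_eq n hn]
  · rw [Finset.prod_ite_eq' (Icc 1 (2*n)) n (fun d => cyclotomic d ℚ ^ 2),
      if_pos (by simp only [mem_Icc]; omega)]

/-! ### The polynomials appearing in the statement -/

noncomputable def g1P (n k : ℕ) : ℚ[X] :=
  (∏ j ∈ range 1, (1 - (X:ℚ[X])^n))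
  * (∏ j ∈ range (2*n-2*k), (1 - (X:ℚ[X])^(j+1)))
  * (∏ j ∈ range n, (1 - (X:ℚ[X])^(2*j+1)))
  * (∏ j ∈ range (n-k), (1 - (X:ℚ[X])^(2*j+1)))

noncomputable def g2P (n k : ℕ) : ℚ[X] :=
  (∏ j ∈ range 1, (1 - (X:ℚ[X])^1))
  * (∏ j ∈ range (n-1), (1 - (X:ℚ[X])^(j+1)))
  * (∏ j ∈ range (2*n-2*k-(n-1)), (1 - (X:ℚ[X])^(j+1)))
  * (∏ j ∈ range n, (1 - (X:ℚ[X])^(j+1)))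
  * (∏ j ∈ range (n-k), (1 - (X:ℚ[X])^(2*j+2)))

noncomputable def APoly (n k : ℕ) : ℚ[X] :=
  ∏ d ∈ Icc 1 (2*n), cyclotomic d ℚ ^ (aC n k d - (cC n k d + rCnt n d))

noncomputable def BPoly (n k : ℕ) : ℚ[X] :=
  ∏ d ∈ Icc 1 (2*n), cyclotomic d ℚ ^ ((cC n k d + rCnt n d) - aC n k d)

lemma ifcard (p : Prop) [Decidable p] :
    ((range 1).filter (fun _ => p)).card = if p then 1 else 0 := by
  rw [Finset.filter_const]
  split <;> simp

lemma g1P_eq (n k : ℕ) (hn : 3 ≤ n) (hk : 2*k ≤ n - 1) :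
    g1P n k = (-1)^(1 + (2*n-2*k) + n + (n-k))
      * ∏ d ∈ Icc 1 (2*n), cyclotomic d ℚ ^ aC n k d := by
  rw [g1P,
    prod_one_sub_X_pow (2*n) 1 (fun _ => n) (fun j _ => by omega),
    prod_one_sub_X_pow (2*n) (2*n-2*k) (fun j => j+1) (fun j hj => by
      simp only [mem_range] at hj; omega),
    prod_one_sub_X_pow (2*n) n (fun j => 2*j+1) (fun j hj => by
      simp only [mem_range] at hj; omega),
    prod_one_sub_X_pow (2*n) (n-k) (fun j => 2*j+1) (fun j hj => by
      simp only [mem_range] at hj; omega)]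
  rw [show ∀ a b c e : ℚ[X], ∀ s1 s2 s3 s4 : ℚ[X],
    (s1 * a) * (s2 * b) * (s3 * c) * (s4 * e) = (s1*s2*s3*s4) * (a*b*(c*e)) from
      fun _ _ _ _ _ _ _ _ => by ring]
  rw [← pow_add, ← pow_add, ← pow_add]
  congr 1
  rw [← Finset.prod_mul_distrib, ← Finset.prod_mul_distrib, ← Finset.prod_mul_distrib]
  apply Finset.prod_congr rfl
  intro d _
  rw [aC, ifcard, ← pow_add, ← pow_add, ← pow_add]
  congr 1
  omega

lemma g2P_eq (n k : ℕ) (hn : 3 ≤ n) (hk : 2*k ≤ n - 1) :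
    g2P n k = (-1)^(1 + (n-1) + (2*n-2*k-(n-1)) + n + (n-k))
      * ∏ d ∈ Icc 1 (2*n), cyclotomic d ℚ ^ cC n k d := by
  rw [g2P,
    prod_one_sub_X_pow (2*n) 1 (fun _ => 1) (fun j _ => by omega),
    prod_one_sub_X_pow (2*n) (n-1) (fun j => j+1) (fun j hj => by
      simp only [mem_range] at hj; omega),
    prod_one_sub_X_pow (2*n) (2*n-2*k-(n-1)) (fun j => j+1) (fun j hj => by
      simp only [mem_range] at hj; omega),
    prod_one_sub_X_pow (2*n) n (fun j => j+1) (fun j hj => by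
      simp only [mem_range] at hj; omega),
    prod_one_sub_X_pow (2*n) (n-k) (fun j => 2*j+2) (fun j hj => by
      simp only [mem_range] at hj; omega)]
  rw [show ∀ a b c e f : ℚ[X], ∀ s1 s2 s3 s4 s5 : ℚ[X],
    (s1 * a) * (s2 * b) * (s3 * c) * (s4 * e) * (s5 * f)
      = (s1*s2*s3*s4*s5) * (a*b*(c*(e*f))) from
      fun _ _ _ _ _ _ _ _ _ _ => by ring]
  rw [← pow_add, ← pow_add, ← pow_add, ← pow_add]
  congr 1
  rw [← Finset.prod_mul_distrib, ← Finset.prod_mul_distrib, ← Finset.prod_mul_distrib,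
    ← Finset.prod_mul_distrib]
  apply Finset.prod_congr rfl
  intro d _
  rw [cC, ifcard, ← pow_add, ← pow_add, ← pow_add, ← pow_add]
  congr 1
  omega

/-! ### The main polynomial identity -/

lemma main_poly_identity (n k : ℕ) (hn : 3 ≤ n) (hk1 : 1 ≤ k) (hk : 2*k ≤ n - 1) :
    g1P n k * BPoly n k = g2P n k * ((qnPoly n * cyclotomic n ℚ ^ 2) * APoly n k) := by
  rw [g1P_eq n k hn hk, g2P_eq n k hn hk, P_eq n hn, BPoly, APoly]
  have hsign : (1 + (2*n-2*k) + n + (n-k)) = (1 + (n-1) + (2*n-2*k-(n-1)) + n + (n-k)) := by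
    omega
  rw [hsign]
  rw [mul_assoc, mul_assoc, ← Finset.prod_mul_distrib,
    ← Finset.prod_mul_distrib, ← Finset.prod_mul_distrib]
  congr 1
  apply Finset.prod_congr rfl
  intro d _
  rw [← pow_add, ← pow_add, ← pow_add]
  congr 1
  omega

/-! ### Coprimality -/

lemma aC_ge (n k d : ℕ) (hodd : Odd n) (hk1 : 1 ≤ k) (hk : 2*k ≤ n - 1) (hn : 3 ≤ n)
    (hd : d ∣ n) (hd1 : 1 ≤ d) : cC n k d + rCnt n d ≤ aC n k d := by
  have hdodd : Odd d := hodd.of_dvd_nat hd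
  rw [aC, cC, rCnt, cnt1_eq, cnt1_eq, cnt1_eq, cnt1_eq, cntO_eq _ _ hdodd,
    cntO_eq _ _ hdodd, cntE_eq _ _ hdodd]
  exact key_ineq n k d hk1 hk hn hd hd1

lemma BPoly_coprime (n k : ℕ) (hodd : Odd n) (hk1 : 1 ≤ k) (hk : 2*k ≤ n - 1) (hn : 3 ≤ n) :
    IsCoprime (BPoly n k) (qnPoly n * cyclotomic n ℚ ^ 2) := by
  rw [P_eq n hn, BPoly]
  apply IsCoprime.prod_left
  intro d hdmem
  apply IsCoprime.prod_right
  intro e hemem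
  by_cases hb : (cC n k d + rCnt n d) - aC n k d = 0
  · rw [hb, pow_zero]; exact isCoprime_one_left
  by_cases hr : rCnt n e = 0
  · rw [hr, pow_zero]; exact isCoprime_one_right
  have hdn : ¬ (d ∣ n) := by
    intro hdvd
    simp only [mem_Icc] at hdmem
    exact hb (by have := aC_ge n k d hodd hk1 hk hn hdvd hdmem.1; omega)
  have hen : e ∣ n := by
    rw [rCnt] at hr
    by_cases h1 : e ∣ n ∧ e ≠ 1
    · exact h1.1
    · by_cases h2 : e = n
      · rw [h2]
      · simp [h1, h2] at hr
  have hne : d ≠ e := fun h => hdn (h ▸ hen)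
  exact (Polynomial.cyclotomic.isCoprime_rat hne).pow

/-! ### Nonvanishing -/

lemma g2P_ne (n k : ℕ) : g2P n k ≠ 0 := by
  rw [g2P]
  apply mul_ne_zero
  apply mul_ne_zero
  apply mul_ne_zero
  apply mul_ne_zero
  · exact prod_ne 1 (fun _ => 1) (fun _ _ => one_pos)
  · exact prod_ne _ _ (fun j _ => by omega)
  · exact prod_ne _ _ (fun j _ => by omega)
  · exact prod_ne _ _ (fun j _ => by omega)
  · exact prod_ne _ _ (fun j _ => by omega)

lemma BPoly_ne (n k : ℕ) : BPoly n k ≠ 0 := by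
  rw [BPoly]
  rw [Finset.prod_ne_zero_iff]
  intro d hd
  exact pow_ne_zero _ (cyclotomic_ne_zero d ℚ)

lemma field_helper {F : Type*} [Field F] (a b c d e f g h i : F)
    (hb : b ≠ 0) (hd : d ≠ 0) (he : e ≠ 0) (hh : h ≠ 0) (hi : i ≠ 0) :
    a / b * (c / (d * e)) * (f * g) / (h * i) = a * c * f * g / (b * d * e * h * i) := by
  rw [div_mul_div_comm, div_mul_eq_mul_div, div_div, div_eq_div_iff
    (mul_ne_zero (mul_ne_zero hb (mul_ne_zero hd he)) (mul_ne_zero hh hi))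
    (mul_ne_zero (mul_ne_zero (mul_ne_zero (mul_ne_zero hb hd) he) hh) hi)]
  ring

theorem q_big_qbino (n : ℕ) (hn : 0 < n) (hodd : Odd n) (k : ℕ) (hk1 : 1 ≤ k)
    (hk2 : k ≤ (n - 1) / 2) :
    congrMod
      (qint (n : ℤ) * qbin q (2 * n - 2 * k) (n - 1) *
        (qpoch q (q ^ 2) n * qpoch q (q ^ 2) (n - k)) /
        (qpoch q q n * qpoch (q ^ 2) (q ^ 2) (n - k)))
      0 (qnPoly n * Polynomial.cyclotomic n ℚ ^ 2) := by
  set x : RatFunc ℚ := qint (n : ℤ) * qbin q (2 * n - 2 * k) (n - 1) *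
        (qpoch q (q ^ 2) n * qpoch q (q ^ 2) (n - k)) /
        (qpoch q q n * qpoch (q ^ 2) (q ^ 2) (n - k)) with hxdef
  have hodd' : n % 2 = 1 := Nat.odd_iff.mp hodd
  have hk : 2*k ≤ n - 1 := by omega
  have hn3 : 3 ≤ n := by omega
  set alg := algebraMap (Polynomial ℚ) (RatFunc ℚ) with halg
  -- rewrite the rational function as alg g1P / alg g2P
  have qpoch_qq : ∀ m : ℕ, qpoch q q m = alg (∏ j ∈ range m, (1 - (X:ℚ[X])^(j+1))) := by
    intro m
    rw [qpoch, map_prod]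
    simp only [show q = RatFunc.X from rfl]
    refine Finset.prod_congr rfl fun j _ => ?_
    rw [map_sub, map_one, map_pow, RatFunc.algebraMap_X, pow_succ, mul_comm]
  have qpoch_odd : ∀ m : ℕ, qpoch q (q^2) m
      = alg (∏ j ∈ range m, (1 - (X:ℚ[X])^(2*j+1))) := by
    intro m
    rw [qpoch, map_prod]
    simp only [show q = RatFunc.X from rfl]
    refine Finset.prod_congr rfl fun j _ => ?_
    rw [map_sub, map_one, map_pow, RatFunc.algebraMap_X]
    congr 1
    rw [← pow_mul]
    exact (pow_succ' _ _).symm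
  have qpoch_even : ∀ m : ℕ, qpoch (q^2) (q^2) m
      = alg (∏ j ∈ range m, (1 - (X:ℚ[X])^(2*j+2))) := by
    intro m
    rw [qpoch, map_prod]
    simp only [show q = RatFunc.X from rfl]
    refine Finset.prod_congr rfl fun j _ => ?_
    rw [map_sub, map_one, map_pow, RatFunc.algebraMap_X]
    congr 1
    rw [← pow_mul, ← pow_add, add_comm]
  have qint_nat : qint (n : ℤ) = alg (∏ j ∈ range 1, (1 - (X:ℚ[X])^n))
      / alg (∏ j ∈ range 1, (1 - (X:ℚ[X])^1)) := by
    rw [qint, zpow_natCast, Finset.prod_range_one, Finset.prod_range_one,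
      map_sub, map_sub, map_pow, RatFunc.algebraMap_X]
    simp only [show q = RatFunc.X from rfl, halg, RatFunc.algebraMap_X, map_one, pow_one]
  -- nonzeroness of the algebra images
  have hne : ∀ (m : ℕ) (f : ℕ → ℕ), (∀ j ∈ range m, 0 < f j) →
      alg (∏ j ∈ range m, (1 - (X:ℚ[X])^(f j))) ≠ 0 := fun m f hf =>
    RatFunc.algebraMap_ne_zero (prod_ne m f hf)
  have hQ : n - 1 ≤ 2*n - 2*k := by omega
  have hxeq : x = alg (g1P n k) / alg (g2P n k) := by
    rw [hxdef]
    have h2 : alg (∏ j ∈ range 1, (1 - (X:ℚ[X])^1)) ≠ 0 :=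
      hne _ _ (fun _ _ => one_pos)
    have h4 : alg (∏ j ∈ range (n-1), (1 - (X:ℚ[X])^(j+1))) ≠ 0 :=
      hne _ _ (fun j _ => by omega)
    have h5 : alg (∏ j ∈ range (2*n-2*k-(n-1)), (1 - (X:ℚ[X])^(j+1))) ≠ 0 :=
      hne _ _ (fun j _ => by omega)
    have h8 : alg (∏ j ∈ range n, (1 - (X:ℚ[X])^(j+1))) ≠ 0 :=
      hne _ _ (fun j _ => by omega)
    have h9 : alg (∏ j ∈ range (n-k), (1 - (X:ℚ[X])^(2*j+2))) ≠ 0 :=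
      hne _ _ (fun j _ => by omega)
    rw [qbin, if_pos hQ, qint_nat, qpoch_qq, qpoch_qq, qpoch_qq, qpoch_qq, qpoch_odd,
      qpoch_odd, qpoch_even, g1P, g2P, map_mul, map_mul, map_mul, map_mul, map_mul, map_mul,
      map_mul]
    exact field_helper _ _ _ _ _ _ _ _ _ h2 h4 h5 h8 h9
  have hg2 : alg (g2P n k) ≠ 0 := RatFunc.algebraMap_ne_zero (g2P_ne n k)
  have hB : BPoly n k ≠ 0 := BPoly_ne n k
  have hBalg : alg (BPoly n k) ≠ 0 := RatFunc.algebraMap_ne_zero hB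
  have hcop : IsCoprime (BPoly n k) (qnPoly n * cyclotomic n ℚ ^ 2) :=
    BPoly_coprime n k hodd hk1 hk hn3
  have hx2 : x = alg ((qnPoly n * cyclotomic n ℚ ^ 2) * APoly n k) / alg (BPoly n k) := by
    rw [hxeq, div_eq_div_iff hg2 hBalg, ← map_mul, ← map_mul]
    exact congrArg alg (by rw [main_poly_identity n k hn3 hk1 hk]; ring)
  rw [congrMod, sub_zero]
  constructor
  · have hmain := RatFunc.num_div_denom x
    nth_rewrite 3 [hx2] at hmain
    have hdenne := RatFunc.denom_ne_zero x
    have h2 := (div_eq_div_iff (RatFunc.algebraMap_ne_zero hdenne) hBalg).mp hmain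
    rw [← map_mul, ← map_mul] at h2
    have h3 := RatFunc.algebraMap_injective ℚ h2
    have hdvd : (qnPoly n * cyclotomic n ℚ ^ 2) ∣ x.num * BPoly n k :=
      ⟨x.denom * APoly n k, by rw [h3]; ring⟩
    exact hcop.symm.dvd_of_dvd_mul_right hdvd
  · have hdvd : x.denom ∣ BPoly n k := (RatFunc.denom_dvd hB).mpr ⟨_, hx2⟩
    exact IsCoprime.of_isCoprime_of_dvd_left hcop hdvd
end

section
/- Let n be an odd positive integer, n ≥ 3, and let ζ be a primitive n-th root of unity in ℂ. Then ∑_{k=1}^{n-1} ζ^k / (1 - ζ^{2k})^2 = (n^2 - 1)/24. -/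
open Polynomial Finset

lemma aux_sum_jw (w : ℂ) (n : ℕ) :
    (1 - w) * ∑ j ∈ Finset.range n, (j : ℂ) * w ^ j
      = (∑ j ∈ Finset.range n, w ^ j) - 1 - ((n : ℂ) - 1) * w ^ n := by
  induction n with
  | zero => simp
  | succ m ih =>
    rw [Finset.sum_range_succ, Finset.sum_range_succ]
    push_cast
    linear_combination ih

lemma orth {n : ℕ} (hn : 0 < n) {ζ : ℂ} (hζ : IsPrimitiveRoot ζ n) (m : ℕ) :
    ∑ k ∈ Finset.range n, (ζ ^ m) ^ k = if n ∣ m then (n : ℂ) else 0 := by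
  by_cases h : n ∣ m
  · rw [if_pos h, (hζ.pow_eq_one_iff_dvd m).mpr h]
    simp
  · rw [if_neg h]
    have h1 : ζ ^ m ≠ 1 := fun hc => h ((hζ.pow_eq_one_iff_dvd m).mp hc)
    have h2 : (ζ ^ m) ^ n = 1 := by
      rw [← pow_mul, mul_comm, pow_mul, hζ.pow_eq_one, one_pow]
    rw [geom_sum_eq h1, h2, sub_self, zero_div]

lemma sum_id (n : ℕ) : ∑ i ∈ Finset.range n, (i : ℂ) = n * (n - 1) / 2 := by
  induction n with
  | zero => simp
  | succ m ih => rw [Finset.sum_range_succ, ih]; push_cast; ring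

lemma sum_sq (n : ℕ) : ∑ i ∈ Finset.range n, (i : ℂ) ^ 2 = n * (n - 1) * (2 * n - 1) / 6 := by
  induction n with
  | zero => simp
  | succ m ih => rw [Finset.sum_range_succ, ih]; push_cast; ring

lemma single_div {n : ℕ} (hn : 0 < n) {i : ℕ} (hi : i < n) (g : ℕ → ℂ) :
    ∑ j ∈ Finset.range n, (if n ∣ (i + j) then g j else 0) = g ((n - i) % n) := by
  rw [Finset.sum_eq_single ((n - i) % n)]
  · rw [if_pos]
    rcases Nat.eq_zero_or_pos i with h0 | h0
    · subst h0; simp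
    · have e1 : (n - i) % n = n - i := Nat.mod_eq_of_lt (by omega)
      rw [e1]
      have e2 : i + (n - i) = n := by omega
      rw [e2]
  · intro j hj hne
    rw [if_neg]
    intro hd
    apply hne
    have hjn : j < n := Finset.mem_range.mp hj
    obtain ⟨c, hc⟩ := hd
    have hcl : n * c < n * 2 := by omega
    have hc2 : c < 2 := Nat.lt_of_mul_lt_mul_left hcl
    have hij : i + j = 0 ∨ i + j = n := by interval_cases c <;> omega
    rcases Nat.eq_zero_or_pos i with h0 | h0
    · subst h0; simp only [Nat.sub_zero, Nat.mod_self]; omega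
    · have e1 : (n - i) % n = n - i := Nat.mod_eq_of_lt (by omega)
      omega
  · intro h
    exact absurd (Finset.mem_range.mpr (Nat.mod_lt _ hn)) h

lemma per_k {n : ℕ} (hn : 0 < n) (hodd : Odd n) {w : ℂ} (hw : w ^ n = 1) (hw2 : w ^ 2 ≠ 1) :
    w / (1 - w ^ 2) ^ 2
      = (∑ j ∈ Finset.range n, (j : ℂ) * w ^ j) ^ 2 / (4 * (n : ℂ) ^ 2)
        - (∑ j ∈ Finset.range n, (-1 : ℂ) ^ j * w ^ j) ^ 2 / 16 := by
  set A := ∑ j ∈ Finset.range n, (j : ℂ) * w ^ j with hAdef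
  set B := ∑ j ∈ Finset.range n, (-1 : ℂ) ^ j * w ^ j with hBdef
  have h1 : w ≠ 1 := by rintro rfl; simp at hw2
  have hm1 : w ≠ -1 := by rintro rfl; simp at hw2
  have hne1 : (1 : ℂ) - w ≠ 0 := sub_ne_zero.mpr h1.symm
  have hne2 : (1 : ℂ) + w ≠ 0 := by
    intro h; exact hm1 (by linear_combination h)
  have hnen : (n : ℂ) ≠ 0 := Nat.cast_ne_zero.mpr hn.ne'
  have hgeom : ∑ j ∈ Finset.range n, w ^ j = 0 := by
    rw [geom_sum_eq h1, hw, sub_self, zero_div]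
  have hA : (1 - w) * A = -(n : ℂ) := by
    rw [hAdef, aux_sum_jw, hgeom, hw]; ring
  have hB : (1 + w) * B = 2 := by
    have h := geom_sum_mul (-w) n
    have hBw : B = ∑ j ∈ Finset.range n, (-w) ^ j := by
      rw [hBdef]; congr 1; ext j; exact (neg_pow w j).symm
    rw [hBw]
    rw [hodd.neg_pow, hw] at h
    linear_combination -h
  have hA2 : A ^ 2 = (n : ℂ) ^ 2 / (1 - w) ^ 2 := by
    field_simp
    linear_combination ((1 - w) * A - (n : ℂ)) * hA
  have hB2 : B ^ 2 = 4 / (1 + w) ^ 2 := by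
    field_simp
    linear_combination ((1 + w) * B + 2) * hB
  have hfac : (1 : ℂ) - w ^ 2 = (1 - w) * (1 + w) := by ring
  rw [hA2, hB2, hfac]
  have d1 : (1 - w) ^ 2 * (4 * (n : ℂ) ^ 2) ≠ 0 := by
    exact mul_ne_zero (pow_ne_zero _ hne1) (by simp [hnen])
  have d2 : ((1 + w) ^ 2 * 16 : ℂ) ≠ 0 := mul_ne_zero (pow_ne_zero _ hne2) (by norm_num)
  have d3 : ((1 - w) * (1 + w)) ^ 2 ≠ 0 := pow_ne_zero _ (mul_ne_zero hne1 hne2)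
  rw [div_div, div_div, div_sub_div _ _ d1 d2, div_eq_div_iff d3 (mul_ne_zero d1 d2)]
  ring

lemma square_expand {n : ℕ} (ζ : ℂ) (k : ℕ) (f : ℕ → ℂ) :
    (∑ j ∈ Finset.range n, f j * (ζ ^ k) ^ j) ^ 2
      = ∑ i ∈ Finset.range n, ∑ j ∈ Finset.range n, f i * f j * (ζ ^ (i + j)) ^ k := by
  rw [sq, Finset.sum_mul_sum]
  refine Finset.sum_congr rfl fun i _ => Finset.sum_congr rfl fun j _ => ?_
  have h : (ζ ^ (i + j)) ^ k = (ζ ^ k) ^ i * (ζ ^ k) ^ j := by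
    rw [← pow_mul, ← pow_mul, ← pow_mul, ← pow_add]
    congr 1
    ring
  rw [h]; ring

lemma sum_sq_full {n : ℕ} (hn : 0 < n) {ζ : ℂ} (hζ : IsPrimitiveRoot ζ n) (f : ℕ → ℂ) :
    ∑ k ∈ Finset.range n, (∑ j ∈ Finset.range n, f j * (ζ ^ k) ^ j) ^ 2
      = ∑ i ∈ Finset.range n, (n : ℂ) * f i * f ((n - i) % n) := by
  calc ∑ k ∈ Finset.range n, (∑ j ∈ Finset.range n, f j * (ζ ^ k) ^ j) ^ 2
      = ∑ k ∈ Finset.range n, ∑ i ∈ Finset.range n, ∑ j ∈ Finset.range n,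
          f i * f j * (ζ ^ (i + j)) ^ k :=
        Finset.sum_congr rfl fun k _ => square_expand ζ k f
    _ = ∑ i ∈ Finset.range n, ∑ j ∈ Finset.range n, ∑ k ∈ Finset.range n,
          f i * f j * (ζ ^ (i + j)) ^ k := by
        rw [Finset.sum_comm]
        exact Finset.sum_congr rfl fun i _ => Finset.sum_comm
    _ = ∑ i ∈ Finset.range n, ∑ j ∈ Finset.range n,
          (if n ∣ (i + j) then f i * f j * (n : ℂ) else 0) := by
        refine Finset.sum_congr rfl fun i _ => Finset.sum_congr rfl fun j _ => ?_
        rw [← Finset.mul_sum, orth hn hζ]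
        simp [mul_ite]
    _ = ∑ i ∈ Finset.range n, f i * f ((n - i) % n) * (n : ℂ) := by
        refine Finset.sum_congr rfl fun i hi => ?_
        exact single_div hn (Finset.mem_range.mp hi) (fun j => f i * f j * (n : ℂ))
    _ = ∑ i ∈ Finset.range n, (n : ℂ) * f i * f ((n - i) % n) :=
        Finset.sum_congr rfl fun i _ => by ring

theorem primitive_root_sum (n : ℕ) (hodd : Odd n) (h3 : 3 ≤ n) (ζ : ℂ)
    (hζ : IsPrimitiveRoot ζ n) :
    ∑ k ∈ Finset.Icc 1 (n - 1), ζ ^ k / (1 - ζ ^ (2 * k)) ^ 2 = ((n : ℂ) ^ 2 - 1) / 24 := by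
  have hn : 0 < n := by omega
  have hnen : (n : ℂ) ≠ 0 := Nat.cast_ne_zero.mpr hn.ne'
  obtain ⟨m, hm⟩ := hodd
  have hodd' : Odd n := ⟨m, hm⟩
  -- the split of range n
  have hsplit : Finset.range n = insert 0 (Finset.Icc 1 (n - 1)) := by
    ext x; simp only [Finset.mem_range, Finset.mem_insert, Finset.mem_Icc]; omega
  have h0ni : 0 ∉ Finset.Icc 1 (n - 1) := by simp
  -- per-term rewrite
  have hterm : ∀ k ∈ Finset.Icc 1 (n - 1),
      ζ ^ k / (1 - ζ ^ (2 * k)) ^ 2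
        = (∑ j ∈ Finset.range n, (j : ℂ) * (ζ ^ k) ^ j) ^ 2 / (4 * (n : ℂ) ^ 2)
          - (∑ j ∈ Finset.range n, (-1 : ℂ) ^ j * (ζ ^ k) ^ j) ^ 2 / 16 := by
    intro k hk
    rw [Finset.mem_Icc] at hk
    have hw : (ζ ^ k) ^ n = 1 := by
      rw [← pow_mul, mul_comm, pow_mul, hζ.pow_eq_one, one_pow]
    have hw2 : (ζ ^ k) ^ 2 ≠ 1 := by
      rw [← pow_mul]
      intro hc
      have hdvd : n ∣ k * 2 := (hζ.pow_eq_one_iff_dvd _).mp hc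
      obtain ⟨c, hc2⟩ := hdvd
      have hcl : n * c < n * 2 := by omega
      have : c < 2 := Nat.lt_of_mul_lt_mul_left hcl
      interval_cases c <;> omega
    have h2k : ζ ^ (2 * k) = (ζ ^ k) ^ 2 := by rw [mul_comm, pow_mul]
    rw [h2k]
    exact per_k hn hodd' hw hw2
  rw [Finset.sum_congr rfl hterm, Finset.sum_sub_distrib]
  -- sums over range n
  have hAfull : ∑ k ∈ Finset.range n, (∑ j ∈ Finset.range n, (j : ℂ) * (ζ ^ k) ^ j) ^ 2
      = ∑ i ∈ Finset.range n, (n : ℂ) * (i : ℂ) * (((n - i) % n : ℕ) : ℂ) :=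
    sum_sq_full hn hζ (fun j => (j : ℂ))
  have hBfull : ∑ k ∈ Finset.range n,
      (∑ j ∈ Finset.range n, (-1 : ℂ) ^ j * (ζ ^ k) ^ j) ^ 2
      = ∑ i ∈ Finset.range n, (n : ℂ) * (-1 : ℂ) ^ i * (-1 : ℂ) ^ ((n - i) % n) :=
    sum_sq_full hn hζ (fun j => (-1 : ℂ) ^ j)
  -- evaluate the A full sum
  have hAval : ∑ i ∈ Finset.range n, (n : ℂ) * (i : ℂ) * (((n - i) % n : ℕ) : ℂ)
      = (n : ℂ) ^ 2 * ((n : ℂ) ^ 2 - 1) / 6 := by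
    have hc : ∀ i ∈ Finset.range n, (n : ℂ) * (i : ℂ) * (((n - i) % n : ℕ) : ℂ)
        = (n : ℂ) ^ 2 * (i : ℂ) - (n : ℂ) * (i : ℂ) ^ 2 := by
      intro i hi
      rw [Finset.mem_range] at hi
      rcases Nat.eq_zero_or_pos i with h0 | h0
      · subst h0; simp
      · have e1 : (n - i) % n = n - i := Nat.mod_eq_of_lt (by omega)
        rw [e1, Nat.cast_sub hi.le]
        ring
    rw [Finset.sum_congr rfl hc, Finset.sum_sub_distrib, ← Finset.mul_sum, ← Finset.mul_sum,
      sum_id, sum_sq]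
    ring
  -- evaluate the B full sum
  have hBval : ∑ i ∈ Finset.range n, (n : ℂ) * (-1 : ℂ) ^ i * (-1 : ℂ) ^ ((n - i) % n)
      = (n : ℂ) - ((n : ℂ) - 1) * (n : ℂ) := by
    rw [hsplit, Finset.sum_insert h0ni]
    have hc : ∀ i ∈ Finset.Icc 1 (n - 1),
        (n : ℂ) * (-1 : ℂ) ^ i * (-1 : ℂ) ^ ((n - i) % n) = -(n : ℂ) := by
      intro i hi
      rw [Finset.mem_Icc] at hi
      have e1 : (n - i) % n = n - i := Nat.mod_eq_of_lt (by omega)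
      rw [e1, mul_assoc, ← pow_add]
      have e2 : i + (n - i) = n := by omega
      rw [e2, hodd'.neg_one_pow]
      ring
    rw [Finset.sum_congr rfl hc, Finset.sum_const, Nat.card_Icc]
    have e0 : (n - 0) % n = 0 := by simp
    rw [e0]
    have e4 : n - 1 + 1 - 1 = n - 1 := by omega
    rw [e4, nsmul_eq_mul, Nat.cast_sub hn, Nat.cast_one]
    ring
  -- values at k = 0
  have hA0 : (∑ j ∈ Finset.range n, (j : ℂ) * ((ζ : ℂ) ^ 0) ^ j) ^ 2
      = ((n : ℂ) * ((n : ℂ) - 1) / 2) ^ 2 := by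
    simp only [pow_zero, one_pow, mul_one]
    rw [sum_id]
  have hB0 : (∑ j ∈ Finset.range n, (-1 : ℂ) ^ j * ((ζ : ℂ) ^ 0) ^ j) ^ 2 = 1 := by
    simp only [pow_zero, one_pow, mul_one]
    rw [neg_one_geom_sum, if_neg (Nat.not_even_iff_odd.mpr hodd')]
    norm_num
  -- restrict to Icc
  have herase : (Finset.range n).erase 0 = Finset.Icc 1 (n - 1) := by
    ext x; simp only [Finset.mem_erase, Finset.mem_range, Finset.mem_Icc]; omega
  have h0mem : 0 ∈ Finset.range n := Finset.mem_range.mpr hn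
  have hAIcc : ∑ k ∈ Finset.Icc 1 (n - 1),
      (∑ j ∈ Finset.range n, (j : ℂ) * (ζ ^ k) ^ j) ^ 2
      = (n : ℂ) ^ 2 * ((n : ℂ) ^ 2 - 1) / 6 - ((n : ℂ) * ((n : ℂ) - 1) / 2) ^ 2 := by
    rw [← herase, Finset.sum_erase_eq_sub h0mem, hAfull, hAval, hA0]
  have hBIcc : ∑ k ∈ Finset.Icc 1 (n - 1),
      (∑ j ∈ Finset.range n, (-1 : ℂ) ^ j * (ζ ^ k) ^ j) ^ 2
      = ((n : ℂ) - ((n : ℂ) - 1) * (n : ℂ)) - 1 := by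
    rw [← herase, Finset.sum_erase_eq_sub h0mem, hBfull, hBval, hB0]
  rw [← Finset.sum_div, ← Finset.sum_div, hAIcc, hBIcc]
  have d1 : (4 : ℂ) * (n : ℂ) ^ 2 ≠ 0 := by
    exact mul_ne_zero (by norm_num) (pow_ne_zero _ hnen)
  have d2 : (16 : ℂ) ≠ 0 := by norm_num
  rw [div_sub_div _ _ d1 d2, div_eq_div_iff (mul_ne_zero d1 d2) (by norm_num : (24:ℂ) ≠ 0)]
  ring
end

section
/- Let n be a positive odd integer. Then ∑_{k=1}^{n-1} q^k / [2k]^2 ≡ (n^2-1)(1-q)^2 / 24 (mod Φ_n(q)), i.e., the reduced numerator of the difference of these two rational functions is divisible by Φ_n(q) and the reduced denominator is coprime to Φ_n(q). -/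
open Polynomial Finset

lemma sum_range_cast (n : ℕ) : ∑ j ∈ range n, (j:ℂ) = n*(n-1)/2 := by
  induction n with
  | zero => simp
  | succ m ih => rw [Finset.sum_range_succ, ih]; push_cast; ring

lemma sum_range_sq_cast (n : ℕ) : ∑ j ∈ range n, (j:ℂ)^2 = n*(n-1)*(2*n-1)/6 := by
  induction n with
  | zero => simp
  | succ m ih => rw [Finset.sum_range_succ, ih]; push_cast; ring

lemma sum_split {M : Type*} [AddCommMonoid M] {n : ℕ} (hn : 0 < n) (g : ℕ → M) :
    ∑ k ∈ range n, g k = g 0 + ∑ k ∈ Icc 1 (n-1), g k := by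
  have h1 : Icc 1 (n-1) = Ico 1 n := by
    rw [← Finset.Ico_add_one_right_eq_Icc]; congr 1; omega
  rw [h1, Finset.range_eq_Ico, Finset.sum_eq_sum_Ico_succ_bot hn]

lemma geom_aux {n : ℕ} (hn : 0 < n) {ζ : ℂ} (hζ : IsPrimitiveRoot ζ n) (m : ℕ) :
    ∑ k ∈ range n, ζ^(m*k) = if n ∣ m then (n:ℂ) else 0 := by
  have h1 : ∀ k, ζ^(m*k) = (ζ^m)^k := fun k => by rw [pow_mul]
  simp only [h1]
  by_cases hd : n ∣ m
  · rw [if_pos hd, (hζ.pow_eq_one_iff_dvd m).mpr hd]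
    simp
  · rw [if_neg hd]
    have hne : ζ^m ≠ 1 := fun h => hd ((hζ.pow_eq_one_iff_dvd m).mp h)
    have hpow : (ζ^m)^n = 1 := by
      rw [← pow_mul, mul_comm, pow_mul, hζ.pow_eq_one, one_pow]
    rw [geom_sum_eq hne, hpow]; simp

lemma one_sub_inv {n : ℕ} (hn : 0 < n) {t : ℂ} (htn : t^n = 1) (ht : t ≠ 1) :
    (1 - t) * (∑ j ∈ range n, (j:ℂ) * t^j) = -n := by
  have hg : ∑ j ∈ range n, t^j = 0 := by
    rw [geom_sum_eq ht, htn]; simp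
  have h4 : ∑ j ∈ range n, t^(j+1) = 0 := by
    have h5 : ∑ j ∈ range n, t^(j+1) = t * ∑ j ∈ range n, t^j := by
      rw [Finset.mul_sum]; exact Finset.sum_congr rfl fun j _ => by ring
    rw [h5, hg, mul_zero]
  have h2 := Finset.sum_range_succ' (fun k => (k:ℂ) * t ^ k) n
  rw [Finset.sum_range_succ] at h2
  simp only [Nat.cast_zero, zero_mul, add_zero] at h2
  have h3 : ∑ j ∈ range n, ((j+1:ℕ):ℂ)*t^(j+1)
      = ∑ j ∈ range n, (j:ℂ)*t^(j+1) + ∑ j ∈ range n, t^(j+1) := by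
    rw [← Finset.sum_add_distrib]
    exact Finset.sum_congr rfl fun j _ => by push_cast; ring
  rw [h3, h4, add_zero, htn, mul_one] at h2
  -- h2 : ∑ j ∈ range n, j*t^j + n = ∑ j ∈ range n, j*t^(j+1)
  have h6 : t * ∑ j ∈ range n, (j:ℂ)*t^j = ∑ j ∈ range n, (j:ℂ)*t^(j+1) := by
    rw [Finset.mul_sum]; exact Finset.sum_congr rfl fun j _ => by ring
  rw [sub_mul, one_mul, h6, ← h2]; ring

lemma one_add_inv {n : ℕ} (hodd : Odd n) {t : ℂ} (htn : t^n = 1) :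
    (1 + t) * (∑ j ∈ range n, (-1:ℂ)^j * t^j) = 2 := by
  have ht : t ≠ -1 := by
    rintro rfl; rw [hodd.neg_one_pow] at htn
    exact two_ne_zero (by linear_combination -htn : (2:ℂ) = 0)
  have h1 : ∀ j : ℕ, (-1:ℂ)^j * t^j = (-t)^j := fun j => (neg_pow t j).symm
  simp only [h1]
  have hne : (-t) ≠ 1 := fun h => ht (by linear_combination -h)
  have hn' : (-t)^n = -1 := by rw [Odd.neg_pow hodd, htn]
  have h3 : -t - 1 ≠ 0 := fun h => ht (by linear_combination -h)
  rw [geom_sum_eq hne, hn', mul_div_assoc', div_eq_iff h3]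
  ring

lemma double_sum {n : ℕ} (hn : 0 < n) {ζ : ℂ} (hζ : IsPrimitiveRoot ζ n) (c : ℕ → ℂ) :
    ∑ k ∈ range n, (∑ j ∈ range n, c j * ζ^(j*k))^2
      = n * ((c 0)^2 + ∑ j ∈ Icc 1 (n-1), c j * c (n-j)) := by
  have expand : ∀ k, (∑ j ∈ range n, c j * ζ^(j*k))^2
      = ∑ j ∈ range n, ∑ l ∈ range n, c j * c l * ζ^((j+l)*k) := by
    intro k
    rw [sq, Finset.sum_mul_sum]
    exact Finset.sum_congr rfl fun j _ => Finset.sum_congr rfl fun l _ => by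
      rw [add_mul, pow_add]; ring
  simp only [expand]
  rw [Finset.sum_comm]
  have inner : ∀ j ∈ range n, ∑ k ∈ range n, ∑ l ∈ range n, c j * c l * ζ^((j+l)*k)
      = ∑ l ∈ range n, c j * c l * (if n ∣ (j+l) then (n:ℂ) else 0) := by
    intro j _
    rw [Finset.sum_comm]
    exact Finset.sum_congr rfl fun l _ => by
      rw [← Finset.mul_sum, geom_aux hn hζ (j+l)]
  rw [Finset.sum_congr rfl inner]
  have step : ∀ j ∈ range n, ∑ l ∈ range n, c j * c l * (if n ∣ (j+l) then (n:ℂ) else 0)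
      = if j = 0 then (c 0)^2 * n else c j * c (n-j) * n := by
    intro j hj
    rw [Finset.mem_range] at hj
    by_cases hj0 : j = 0
    · subst hj0
      rw [if_pos rfl]
      have : ∀ l ∈ range n, c 0 * c l * (if n ∣ (0+l) then (n:ℂ) else 0)
          = if l = 0 then c 0 * c 0 * n else 0 := by
        intro l hl
        rw [Finset.mem_range] at hl
        by_cases hl0 : l = 0
        · subst hl0; simp
        · rw [if_neg hl0, if_neg, mul_zero]
          rw [zero_add]
          exact fun hdvd => hl0 (Nat.eq_zero_of_dvd_of_lt hdvd hl)
      rw [Finset.sum_congr rfl this, Finset.sum_ite_eq' (range n) 0 (fun _ => c 0 * c 0 * n)]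
      rw [if_pos (Finset.mem_range.mpr hn)]
      ring
    · rw [if_neg hj0]
      have : ∀ l ∈ range n, c j * c l * (if n ∣ (j+l) then (n:ℂ) else 0)
          = if l = n - j then c j * c l * n else 0 := by
        intro l hl
        rw [Finset.mem_range] at hl
        by_cases hlj : l = n - j
        · subst hlj
          have heq : j + (n - j) = n := by omega
          rw [if_pos rfl, heq, if_pos (dvd_refl n)]
        · rw [if_neg hlj, if_neg, mul_zero]
          intro hdvd
          obtain ⟨m, hm⟩ := hdvd
          rcases m with _ | _ | m
          · omega
          · omega
          · have h2n : n * 2 ≤ n * (m + 1 + 1) := Nat.mul_le_mul_left n (by omega)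
            omega
      rw [Finset.sum_congr rfl this, Finset.sum_ite_eq' (range n) (n-j) (fun l => c j * c l * n)]
      rw [if_pos (Finset.mem_range.mpr (by omega))]
  rw [Finset.sum_congr rfl step, sum_split hn]
  rw [if_pos rfl]
  have : ∀ j ∈ Icc 1 (n-1), (if j = 0 then (c 0)^2 * (n:ℂ) else c j * c (n-j) * n)
      = c j * c (n-j) * n := by
    intro j hj
    rw [Finset.mem_Icc] at hj
    rw [if_neg (by omega)]
  rw [Finset.sum_congr rfl this, mul_add, Finset.mul_sum]
  congr 1
  · ring
  · exact Finset.sum_congr rfl fun j _ => by ring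

lemma frac_id (t a : ℂ) (h1 : 1 - t ≠ 0) (h2 : 1 + t ≠ 0) (ha : a ≠ 0) :
    t / ((1-t)*(1+t))^2 = (-a/(1-t))^2/(4*a^2) - (2/(1+t))^2/16 := by
  have e1 : (1-t)^2 ≠ 0 := pow_ne_zero _ h1
  have e2 : (1+t)^2 ≠ 0 := pow_ne_zero _ h2
  have ea : (4:ℂ)*a^2 ≠ 0 := mul_ne_zero (by norm_num) (pow_ne_zero _ ha)
  have hd1 : (1-t)^2*((4:ℂ)*a^2) ≠ 0 := mul_ne_zero e1 ea
  have hd2 : (1+t)^2*(16:ℂ) ≠ 0 := mul_ne_zero e2 (by norm_num)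
  rw [div_pow, div_pow, div_div, div_div,
    div_sub_div _ _ hd1 hd2,
    div_eq_div_iff (pow_ne_zero 2 (mul_ne_zero h1 h2)) (mul_ne_zero hd1 hd2)]
  ring

lemma core {n : ℕ} (hn1 : 1 < n) (hodd : Odd n) {ζ : ℂ} (hζ : IsPrimitiveRoot ζ n) :
    ∑ k ∈ Icc 1 (n-1), ζ^k / (1 - ζ^(2*k))^2 = ((n:ℂ)^2 - 1)/24 := by
  have hn : 0 < n := by omega
  have hnc : (n:ℂ) ≠ 0 := Nat.cast_ne_zero.mpr (by omega)
  have hcop : Nat.Coprime n 2 := Nat.coprime_two_right.mpr hodd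
  have hndvd2 : ∀ k, 0 < k → k < n → ¬ n ∣ 2*k := by
    intro k hk0 hkn h
    have h' : n ∣ k := hcop.dvd_of_dvd_mul_right (by rwa [mul_comm] at h)
    have := Nat.le_of_dvd hk0 h'
    omega
  have hpow1 : ∀ k ∈ Icc 1 (n-1), ζ^k ≠ 1 := by
    intro k hk h
    rw [mem_Icc] at hk
    have h' := (hζ.pow_eq_one_iff_dvd k).mp h
    have := Nat.le_of_dvd (by omega) h'
    omega
  have hpown : ∀ k : ℕ, (ζ^k)^n = 1 := by
    intro k
    rw [← pow_mul, mul_comm, pow_mul, hζ.pow_eq_one, one_pow]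
  have hneg : ∀ k, k < n → (1:ℂ) + ζ^k ≠ 0 := by
    intro k hkn h
    have hz : ζ^k = -1 := by linear_combination h
    by_cases hk0 : k = 0
    · rw [hk0, pow_zero] at hz; norm_num at hz
    · have h2 : ζ^(2*k) = 1 := by rw [mul_comm, pow_mul, hz]; norm_num
      exact hndvd2 k (by omega) hkn ((hζ.pow_eq_one_iff_dvd _).mp h2)
  -- the two "Fourier" sums
  set W : ℕ → ℂ := fun k => ∑ j ∈ range n, (j:ℂ) * ζ^(j*k) with hWdef
  set V : ℕ → ℂ := fun k => ∑ j ∈ range n, (-1:ℂ)^j * ζ^(j*k) with hVdef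
  have hWconv : ∀ k, ∑ j ∈ range n, (j:ℂ) * (ζ^k)^j = W k :=
    fun k => Finset.sum_congr rfl fun j _ => by rw [← pow_mul']
  have hVconv : ∀ k, ∑ j ∈ range n, (-1:ℂ)^j * (ζ^k)^j = V k :=
    fun k => Finset.sum_congr rfl fun j _ => by rw [← pow_mul']
  have hW : ∀ k ∈ Icc 1 (n-1), (1 - ζ^k) * W k = -n := by
    intro k hk
    have := one_sub_inv hn (hpown k) (hpow1 k hk)
    rwa [hWconv k] at this
  have hV : ∀ k, (1 + ζ^k) * V k = 2 := by
    intro k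
    have := one_add_inv hodd (hpown k)
    rwa [hVconv k] at this
  -- termwise identity
  have hterm : ∀ k ∈ Icc 1 (n-1),
      ζ^k / (1 - ζ^(2*k))^2 = (W k)^2/(4*(n:ℂ)^2) - (V k)^2/16 := by
    intro k hk
    have hkn : k < n := by rw [mem_Icc] at hk; omega
    have ht1 : 1 - ζ^k ≠ 0 := sub_ne_zero.mpr (Ne.symm (hpow1 k hk))
    have ht2 : (1:ℂ) + ζ^k ≠ 0 := hneg k hkn
    have e1 : W k = -n/(1-ζ^k) := by
      rw [eq_div_iff ht1]; linear_combination hW k hk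
    have e2 : V k = 2/(1+ζ^k) := by
      rw [eq_div_iff ht2]; linear_combination hV k
    have h2k : ζ^(2*k) = (ζ^k)^2 := by rw [pow_mul']
    rw [h2k, show (1:ℂ) - (ζ^k)^2 = (1-ζ^k)*(1+ζ^k) by ring, e1, e2]
    exact frac_id (ζ^k) (n:ℂ) ht1 ht2 hnc
  -- sums of squares of W and V
  have hWsq : ∑ k ∈ range n, (W k)^2
      = n * ((0:ℂ)^2 + ∑ j ∈ Icc 1 (n-1), (j:ℂ) * ((n-j:ℕ):ℂ)) := by
    have := double_sum hn hζ (fun j => (j:ℂ))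
    simpa using this
  have hVsq : ∑ k ∈ range n, (V k)^2
      = n * (1 + ∑ j ∈ Icc 1 (n-1), (-1:ℂ)^j * (-1:ℂ)^(n-j)) := by
    have := double_sum hn hζ (fun j => (-1:ℂ)^j)
    simpa using this
  have hE1 : ∑ j ∈ Icc 1 (n-1), (j:ℂ) * ((n-j:ℕ):ℂ) = n*((n:ℂ)^2-1)/6 := by
    have hc : ∀ j ∈ Icc 1 (n-1), (j:ℂ) * ((n-j:ℕ):ℂ) = (j:ℂ) * ((n:ℂ) - (j:ℂ)) := by
      intro j hj
      rw [mem_Icc] at hj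
      rw [Nat.cast_sub (by omega)]
    rw [Finset.sum_congr rfl hc]
    have hsplit := sum_split hn (fun j => (j:ℂ) * ((n:ℂ) - (j:ℂ)))
    simp only [Nat.cast_zero, zero_mul, zero_add] at hsplit
    rw [← hsplit]
    have hexp : ∑ j ∈ range n, (j:ℂ) * ((n:ℂ) - (j:ℂ))
        = (n:ℂ) * (∑ j ∈ range n, (j:ℂ)) - ∑ j ∈ range n, (j:ℂ)^2 := by
      rw [Finset.mul_sum, ← Finset.sum_sub_distrib]
      exact Finset.sum_congr rfl fun j _ => by ring
    rw [hexp, sum_range_cast, sum_range_sq_cast]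
    ring
  have hE2 : ∑ j ∈ Icc 1 (n-1), (-1:ℂ)^j * (-1:ℂ)^(n-j) = -((n:ℂ) - 1) := by
    have hc : ∀ j ∈ Icc 1 (n-1), (-1:ℂ)^j * (-1:ℂ)^(n-j) = -1 := by
      intro j hj
      rw [mem_Icc] at hj
      rw [← pow_add]
      have hjn : j + (n - j) = n := by omega
      rw [hjn, hodd.neg_one_pow]
    rw [Finset.sum_congr rfl hc, Finset.sum_const, Nat.card_Icc]
    have hcard : n - 1 + 1 - 1 = n - 1 := by omega
    rw [hcard, nsmul_eq_mul, Nat.cast_sub (by omega : 1 ≤ n)]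
    push_cast
    ring
  have hW0 : W 0 = (n:ℂ)*((n:ℂ)-1)/2 := by
    rw [hWdef]
    simp only [mul_zero, pow_zero, mul_one]
    exact sum_range_cast n
  have hV0 : V 0 = 1 := by
    rw [hVdef]
    simp only [mul_zero, pow_zero, mul_one]
    rw [neg_one_geom_sum, if_neg ((Nat.not_even_iff_odd.mpr hodd))]
  have hWs : ∑ k ∈ Icc 1 (n-1), (W k)^2
      = (n:ℂ)*((n:ℂ)*((n:ℂ)^2-1)/6) - ((n:ℂ)*((n:ℂ)-1)/2)^2 := by
    have hsplit := sum_split hn (fun k => (W k)^2)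
    have h1 : ∑ k ∈ Icc 1 (n-1), (W k)^2 = ∑ k ∈ range n, (W k)^2 - (W 0)^2 := by
      rw [hsplit]; ring
    rw [h1, hWsq, hE1, hW0]; ring
  have hVs : ∑ k ∈ Icc 1 (n-1), (V k)^2 = (n:ℂ)*(2 - (n:ℂ)) - 1 := by
    have hsplit := sum_split hn (fun k => (V k)^2)
    have h1 : ∑ k ∈ Icc 1 (n-1), (V k)^2 = ∑ k ∈ range n, (V k)^2 - (V 0)^2 := by
      rw [hsplit]; ring
    rw [h1, hVsq, hE2, hV0]; ring
  rw [Finset.sum_congr rfl hterm, Finset.sum_sub_distrib, ← Finset.sum_div, ← Finset.sum_div,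
    hWs, hVs]
  have d1 : (4:ℂ)*(n:ℂ)^2 ≠ 0 := mul_ne_zero (by norm_num) (pow_ne_zero _ hnc)
  rw [div_sub_div _ _ d1 (by norm_num : (16:ℂ) ≠ 0),
    div_eq_div_iff (mul_ne_zero d1 (by norm_num : (16:ℂ) ≠ 0)) (by norm_num : (24:ℂ) ≠ 0)]
  ring

theorem q_sum_inverse_squares (n : ℕ) (hn : 0 < n) (hodd : Odd n) :
    congrMod (∑ k ∈ Finset.Icc 1 (n - 1), q ^ k / qint (2 * (k : ℤ)) ^ 2)
      (((n : RatFunc ℚ) ^ 2 - 1) * (1 - q) ^ 2 / 24) (Polynomial.cyclotomic n ℚ) := by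
  unfold congrMod
  by_cases hn1' : n = 1
  · subst hn1'
    have he : Finset.Icc 1 (1 - 1) = (∅ : Finset ℕ) := rfl
    have h0 : ((1:ℕ) : RatFunc ℚ) ^ 2 - 1 = 0 := by norm_num
    rw [he, Finset.sum_empty, h0, zero_mul, zero_div, sub_zero, RatFunc.num_zero,
      RatFunc.denom_zero]
    exact ⟨dvd_zero _, isCoprime_one_left⟩
  have hn1 : 1 < n := by omega
  -- primitive root
  have hζ := Complex.isPrimitiveRoot_exp n (by omega)
  set ζ : ℂ := Complex.exp (2 * Real.pi * Complex.I / n) with hζdef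
  -- polynomials
  set s : Finset ℕ := Finset.Icc 1 (n - 1) with hs
  set Bp : ℚ[X] := 24 * ∏ k ∈ s, (1 - X ^ (2 * k)) ^ 2 with hBp
  set Ap : ℚ[X] := (1 - X) ^ 2 * (24 * (∑ k ∈ s, X ^ k * ∏ j ∈ s.erase k, (1 - X ^ (2 * j)) ^ 2)
      - ((n : ℚ[X]) ^ 2 - 1) * ∏ k ∈ s, (1 - X ^ (2 * k)) ^ 2) with hAp
  set D : RatFunc ℚ := (∑ k ∈ s, q ^ k / qint (2 * (k : ℤ)) ^ 2)
      - ((n : RatFunc ℚ) ^ 2 - 1) * (1 - q) ^ 2 / 24 with hD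
  have hqX : q = algebraMap ℚ[X] (RatFunc ℚ) X := RatFunc.algebraMap_X.symm
  have hXm : ∀ m : ℕ, 0 < m → (1 - X ^ m : ℚ[X]) ≠ 0 := by
    intro m hm h
    have h2 := congrArg (Polynomial.eval 0) h
    simp [zero_pow hm.ne'] at h2
  have hq1 : ∀ m : ℕ, 0 < m → (1 : RatFunc ℚ) - q ^ m ≠ 0 := by
    intro m hm
    have h2 : (1 : RatFunc ℚ) - q ^ m = algebraMap ℚ[X] (RatFunc ℚ) (1 - X ^ m) := by
      rw [map_sub, map_one, map_pow, hqX]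
    rw [h2]
    exact RatFunc.algebraMap_ne_zero (hXm m hm)
  have hgk : ∀ k ∈ s, ((1 : RatFunc ℚ) - q ^ (2 * k)) ^ 2 ≠ 0 := by
    intro k hk
    rw [hs, mem_Icc] at hk
    exact pow_ne_zero _ (hq1 (2 * k) (by omega))
  have h24 : (24 : RatFunc ℚ) ≠ 0 := by
    rw [show (24 : RatFunc ℚ) = algebraMap ℚ[X] (RatFunc ℚ) 24 from (map_ofNat _ 24).symm]
    exact RatFunc.algebraMap_ne_zero (by norm_num)
  -- key RatFunc identity
  have key : D * (algebraMap ℚ[X] (RatFunc ℚ) Bp) = algebraMap ℚ[X] (RatFunc ℚ) Ap := by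
    rw [hD, hBp, hAp]
    simp only [map_mul, map_sub, map_pow, map_one, map_sum, map_prod, map_ofNat, map_natCast,
      ← hqX]
    have hterm : ∀ k ∈ s, q ^ k / qint (2 * (k : ℤ)) ^ 2
        = q ^ k * (1 - q) ^ 2 / (1 - q ^ (2 * k)) ^ 2 := by
      intro k hk
      have hzq : q ^ (2 * (k : ℤ)) = q ^ (2 * k) := by
        rw [show (2 * (k : ℤ)) = ((2 * k : ℕ) : ℤ) by push_cast; ring, zpow_natCast]
      rw [qint, hzq, div_pow, div_div_eq_mul_div]
    rw [Finset.sum_congr rfl hterm, sub_mul, Finset.sum_mul]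
    have hterm2 : ∀ k ∈ s, (q ^ k * (1 - q) ^ 2 / (1 - q ^ (2 * k)) ^ 2)
          * (24 * ∏ j ∈ s, (1 - q ^ (2 * j)) ^ 2)
        = 24 * (q ^ k * (1 - q) ^ 2 * ∏ j ∈ s.erase k, (1 - q ^ (2 * j)) ^ 2) := by
      intro k hk
      rw [← Finset.mul_prod_erase s (fun j => (1 - q ^ (2 * j)) ^ 2) hk]
      have h := hgk k hk
      have h' : (1 : RatFunc ℚ) - q ^ (2 * k) ≠ 0 := fun e => h (by rw [e]; ring)
      field_simp
    rw [Finset.sum_congr rfl hterm2]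
    have h2nd : (((n : RatFunc ℚ) ^ 2 - 1) * (1 - q) ^ 2 / 24)
          * (24 * ∏ j ∈ s, (1 - q ^ (2 * j)) ^ 2)
        = ((n : RatFunc ℚ) ^ 2 - 1) * (1 - q) ^ 2 * ∏ j ∈ s, (1 - q ^ (2 * j)) ^ 2 := by
      rw [div_mul_eq_mul_div, mul_comm (24 : RatFunc ℚ) (∏ j ∈ s, (1 - q ^ (2 * j)) ^ 2),
        ← mul_assoc, mul_div_assoc, div_self h24, mul_one]
    rw [h2nd]
    rw [mul_sub, Finset.mul_sum, Finset.mul_sum]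
    congr 1
    · exact Finset.sum_congr rfl fun k _ => by ring
    · ring
  -- evaluation at ζ
  have hζ2k : ∀ k ∈ s, ((1 : ℂ) - ζ ^ (2 * k)) ≠ 0 := by
    intro k hk h
    rw [hs, mem_Icc] at hk
    have h1 : ζ ^ (2 * k) = 1 := by linear_combination -h
    have h2 := (hζ.pow_eq_one_iff_dvd _).mp h1
    have hcop : Nat.Coprime n 2 := Nat.coprime_two_right.mpr hodd
    have h3 : n ∣ k := hcop.dvd_of_dvd_mul_right (by rwa [mul_comm] at h2)
    have := Nat.le_of_dvd (by omega) h3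
    omega
  have hgkC : ∀ k ∈ s, ((1 : ℂ) - ζ ^ (2 * k)) ^ 2 ≠ 0 := fun k hk => pow_ne_zero _ (hζ2k k hk)
  have hApz : Polynomial.aeval ζ Ap = 0 := by
    rw [hAp]
    simp only [map_mul, map_sub, map_pow, map_one, map_sum, map_prod, map_ofNat, map_natCast,
      Polynomial.aeval_X]
    apply mul_eq_zero_of_right
    have hpe : ∀ k ∈ s, ∏ j ∈ s.erase k, ((1 : ℂ) - ζ ^ (2 * j)) ^ 2
        = (∏ j ∈ s, ((1 : ℂ) - ζ ^ (2 * j)) ^ 2) / ((1 : ℂ) - ζ ^ (2 * k)) ^ 2 := by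
      intro k hk
      rw [eq_div_iff (hgkC k hk), mul_comm]
      exact Finset.mul_prod_erase s (fun j => ((1 : ℂ) - ζ ^ (2 * j)) ^ 2) hk
    have hsum : ∑ k ∈ s, ζ ^ k * ∏ j ∈ s.erase k, ((1 : ℂ) - ζ ^ (2 * j)) ^ 2
        = (∑ k ∈ s, ζ ^ k / ((1 : ℂ) - ζ ^ (2 * k)) ^ 2)
          * ∏ j ∈ s, ((1 : ℂ) - ζ ^ (2 * j)) ^ 2 := by
      rw [Finset.sum_mul]
      refine Finset.sum_congr rfl fun k hk => ?_
      rw [hpe k hk, mul_div_assoc', div_mul_eq_mul_div]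
    rw [hsum, hs, core hn1 hodd hζ]
    ring
  have hcyc : Polynomial.cyclotomic n ℚ = minpoly ℚ ζ := Polynomial.cyclotomic_eq_minpoly_rat hζ hn
  have hPA : Polynomial.cyclotomic n ℚ ∣ Ap := hcyc ▸ minpoly.dvd ℚ ζ hApz
  have hBz : Polynomial.aeval ζ Bp ≠ 0 := by
    rw [hBp]
    simp only [map_mul, map_prod, map_sub, map_pow, map_one, map_ofNat, Polynomial.aeval_X]
    exact mul_ne_zero (by norm_num)
      (Finset.prod_ne_zero_iff.mpr fun k hk => pow_ne_zero _ (hζ2k k hk))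
  have hPB : ¬ Polynomial.cyclotomic n ℚ ∣ Bp := by
    rintro ⟨c, hc⟩
    apply hBz
    rw [hc, map_mul, hcyc, minpoly.aeval, zero_mul]
  -- cross multiplication
  have hdenne : algebraMap ℚ[X] (RatFunc ℚ) D.denom ≠ 0 :=
    RatFunc.algebraMap_ne_zero (RatFunc.denom_ne_zero D)
  have hnum_eq : algebraMap ℚ[X] (RatFunc ℚ) D.num
      = D * algebraMap ℚ[X] (RatFunc ℚ) D.denom := by
    exact (div_eq_iff hdenne).mp (RatFunc.num_div_denom D)
  have hcross : D.num * Bp = Ap * D.denom := by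
    apply RatFunc.algebraMap_injective ℚ
    rw [map_mul (algebraMap ℚ[X] (RatFunc ℚ)) Ap D.denom, ← key, map_mul, hnum_eq]
    ring
  have hirr : Irreducible (Polynomial.cyclotomic n ℚ) := Polynomial.cyclotomic.irreducible_rat hn
  have hprime : Prime (Polynomial.cyclotomic n ℚ) := hirr.prime
  have hPnum : Polynomial.cyclotomic n ℚ ∣ D.num := by
    have h1 : Polynomial.cyclotomic n ℚ ∣ D.num * Bp := hcross ▸ hPA.mul_right D.denom
    rcases hprime.2.2 _ _ h1 with h | h
    · exact h
    · exact absurd h hPB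
  have hdenB : D.denom ∣ Bp := by
    have h1 : D.denom ∣ D.num * Bp := hcross ▸ dvd_mul_left D.denom Ap
    exact (RatFunc.isCoprime_num_denom D).symm.dvd_of_dvd_mul_left h1
  refine ⟨hPnum, ?_⟩
  exact (hirr.coprime_iff_not_dvd.mpr fun h => hPB (h.trans hdenB)).symm
end

section
/- (Staver's identity) For every positive integer N, ∑_{k=1}^{N} binom(2k,k)/k = ((N+1)/3) · binom(2N+1,N) · ∑_{k=1}^{N} 1/(k^2 · binom(N,k)^2), as an identity of rational numbers. -/
open Polynomial Finset
set_option maxHeartbeats 1000000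

/-- Gosper certificate for the telescoping. -/
noncomputable def stH (N i : ℕ) : ℚ :=
  (Nat.choose (2 * N + 1) N : ℚ) * (2 * (i : ℚ) - 3 * N - 3) /
    (3 * ((N : ℚ) + 1) ^ 2 * (Nat.choose N i : ℚ) ^ 2)

lemma choose_cast_ne (n k : ℕ) (h : k ≤ n) : (Nat.choose n k : ℚ) ≠ 0 := by
  exact_mod_cast Nat.choose_pos h |>.ne'

lemma staver_key (N i : ℕ) (hi : i < N) :
    ((N : ℚ) + 1 + 1) / 3 * (Nat.choose (2 * (N + 1) + 1) (N + 1) : ℚ) *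
        (1 / (((i : ℚ) + 1) ^ 2 * (Nat.choose (N + 1) (i + 1) : ℚ) ^ 2)) -
      ((N : ℚ) + 1) / 3 * (Nat.choose (2 * N + 1) N : ℚ) *
        (1 / (((i : ℚ) + 1) ^ 2 * (Nat.choose N (i + 1) : ℚ) ^ 2)) =
    stH N (i + 1) - stH N i := by
  have hiN : i ≤ N := hi.le
  have hiN' : i + 1 ≤ N := hi
  have hB : (Nat.choose N i : ℚ) ≠ 0 := choose_cast_ne N i hiN
  have hA : (Nat.choose N (i + 1) : ℚ) ≠ 0 := choose_cast_ne N (i + 1) hiN'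
  have hA' : (Nat.choose (N + 1) (i + 1) : ℚ) ≠ 0 :=
    choose_cast_ne (N + 1) (i + 1) (by omega)
  have hk : ((i : ℚ) + 1) ≠ 0 := by positivity
  have hNi : ((N : ℚ) - i) ≠ 0 := by
    have : (i : ℚ) < N := by exact_mod_cast hi
    linarith
  have hN1 : ((N : ℚ) + 1) ≠ 0 := by positivity
  have hN2 : ((N : ℚ) + 2) ≠ 0 := by positivity
  -- relation (1): (N+1).choose (i+1) * (N - i) = N.choose (i+1) * (N+1)
  have a1 : (Nat.choose (N + 1) (i + 1) : ℚ) * ((N : ℚ) - i)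
      = (Nat.choose N (i + 1) : ℚ) * ((N : ℚ) + 1) := by
    have := Nat.choose_mul_succ_eq N (i + 1)
    have h2 : N + 1 - (i + 1) = N - i := by omega
    rw [h2] at this
    have := congrArg (fun x : ℕ => (x : ℚ)) this
    push_cast [Nat.cast_sub hiN] at this
    linarith
  -- relation (2): N.choose (i+1) * (i+1) = N.choose i * (N - i)
  have a2 : (Nat.choose N (i + 1) : ℚ) * ((i : ℚ) + 1)
      = (Nat.choose N i : ℚ) * ((N : ℚ) - i) := by
    have := Nat.choose_succ_right_eq N i
    have := congrArg (fun x : ℕ => (x : ℚ)) this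
    push_cast [Nat.cast_sub hiN] at this
    linarith
  -- relation (3): choose (2N+3) (N+1) * (N+1) * (N+2) = choose (2N+1) N * (2N+2) * (2N+3)
  have a3 : (Nat.choose (2 * (N + 1) + 1) (N + 1) : ℚ) * ((N : ℚ) + 1) * ((N : ℚ) + 2)
      = (Nat.choose (2 * N + 1) N : ℚ) * (2 * N + 2) * (2 * N + 3) := by
    have e1 := Nat.add_one_mul_choose_eq (2 * N + 2) N
    have e2 := Nat.choose_succ_right_eq (2 * N + 2) N
    have e3 := Nat.add_one_mul_choose_eq (2 * N + 1) N
    have h1 : 2 * (N + 1) + 1 = (2 * N + 2) + 1 := by ring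
    have h2 : 2 * N + 2 - N = N + 2 := by omega
    rw [h2] at e2
    have e1' := congrArg (fun x : ℕ => (x : ℚ)) e1
    have e2' := congrArg (fun x : ℕ => (x : ℚ)) e2
    have e3' := congrArg (fun x : ℕ => (x : ℚ)) e3
    push_cast at e1' e2' e3' ⊢
    rw [h1]
    push_cast at *
    -- e1' : (2N+3) * choose (2N+2) N = choose (2N+3) (N+1) * (N+1)
    -- e2' : choose (2N+2) (N+1) * (N+1) = choose (2N+2) N * (N+2)
    -- e3' : (2N+2) * choose (2N+1) N = choose (2N+2) (N+1) * (N+1)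
    nlinarith [e1', e2', e3']
  have hA'eq : (Nat.choose (N + 1) (i + 1) : ℚ)
      = (Nat.choose N (i + 1) : ℚ) * ((N : ℚ) + 1) / ((N : ℚ) - i) := by
    field_simp; linarith [a1]
  have hAeq : (Nat.choose N (i + 1) : ℚ)
      = (Nat.choose N i : ℚ) * ((N : ℚ) - i) / ((i : ℚ) + 1) := by
    field_simp; linarith [a2]
  have hC'eq : (Nat.choose (2 * (N + 1) + 1) (N + 1) : ℚ)
      = (Nat.choose (2 * N + 1) N : ℚ) * (2 * N + 2) * (2 * N + 3)
          / (((N : ℚ) + 1) * ((N : ℚ) + 2)) := by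
    rw [eq_div_iff (by positivity)]; linarith [a3]
  rw [stH, stH, hC'eq, hA'eq, hAeq]
  have hNc : (Nat.choose N (i + 1) : ℚ) = (Nat.choose N i : ℚ) * ((N : ℚ) - i) / ((i : ℚ) + 1) :=
    hAeq
  field_simp
  push_cast
  ring

lemma staver_step (N : ℕ) :
    ((N : ℚ) + 1 + 1) / 3 * (Nat.choose (2 * (N + 1) + 1) (N + 1) : ℚ) *
        ∑ k ∈ Finset.Icc 1 (N + 1), 1 / ((k : ℚ) ^ 2 * (Nat.choose (N + 1) k : ℚ) ^ 2) =
      ((N : ℚ) + 1) / 3 * (Nat.choose (2 * N + 1) N : ℚ) *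
          ∑ k ∈ Finset.Icc 1 N, 1 / ((k : ℚ) ^ 2 * (Nat.choose N k : ℚ) ^ 2) +
        (Nat.choose (2 * (N + 1)) (N + 1) : ℚ) / ((N : ℚ) + 1) := by
  have hconv : ∀ (M : ℕ) (f : ℕ → ℚ),
      ∑ k ∈ Finset.Icc 1 M, f k = ∑ i ∈ Finset.range M, f (i + 1) := by
    intro M f
    rw [← Finset.Ico_add_one_right_eq_Icc, Finset.sum_Ico_eq_sum_range]
    simp [add_comm]
  rw [Finset.sum_Icc_succ_top (by omega : 1 ≤ N + 1)]
  rw [hconv N, hconv N]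
  rw [mul_add]
  have tele : ∑ i ∈ Finset.range N, (stH N (i + 1) - stH N i) = stH N N - stH N 0 :=
    Finset.sum_range_sub (stH N) N
  have hsum : ((N : ℚ) + 1 + 1) / 3 * (Nat.choose (2 * (N + 1) + 1) (N + 1) : ℚ) *
        ∑ i ∈ Finset.range N, (1 / (((i : ℚ) + 1) ^ 2 * (Nat.choose (N + 1) (i + 1) : ℚ) ^ 2)) -
      ((N : ℚ) + 1) / 3 * (Nat.choose (2 * N + 1) N : ℚ) *
        ∑ i ∈ Finset.range N, (1 / (((i : ℚ) + 1) ^ 2 * (Nat.choose N (i + 1) : ℚ) ^ 2))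
      = stH N N - stH N 0 := by
    rw [Finset.mul_sum, Finset.mul_sum, ← Finset.sum_sub_distrib, ← tele]
    refine Finset.sum_congr rfl fun i hi => ?_
    exact staver_key N i (Finset.mem_range.mp hi)
  have hpush : ∀ i : ℕ, (((i : ℕ) + 1 : ℕ) : ℚ) = (i : ℚ) + 1 := by intro i; push_cast; ring
  simp only [Nat.cast_add, Nat.cast_one] at *
  -- final scalar identity
  have hN1 : ((N : ℚ) + 1) ≠ 0 := by positivity
  have hN2 : ((N : ℚ) + 2) ≠ 0 := by positivity
  have a3 : (Nat.choose (2 * (N + 1) + 1) (N + 1) : ℚ) * ((N : ℚ) + 1) * ((N : ℚ) + 2)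
      = (Nat.choose (2 * N + 1) N : ℚ) * (2 * N + 2) * (2 * N + 3) := by
    have e1 := Nat.add_one_mul_choose_eq (2 * N + 2) N
    have e2 := Nat.choose_succ_right_eq (2 * N + 2) N
    have e3 := Nat.add_one_mul_choose_eq (2 * N + 1) N
    have h1 : 2 * (N + 1) + 1 = (2 * N + 2) + 1 := by ring
    have h2 : 2 * N + 2 - N = N + 2 := by omega
    rw [h2] at e2
    have e1' := congrArg (fun x : ℕ => (x : ℚ)) e1
    have e2' := congrArg (fun x : ℕ => (x : ℚ)) e2
    have e3' := congrArg (fun x : ℕ => (x : ℚ)) e3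
    push_cast at e1' e2' e3' ⊢
    rw [h1]
    push_cast at *
    nlinarith [e1', e2', e3']
  have hD : (Nat.choose (2 * (N + 1)) (N + 1) : ℚ) * ((N : ℚ) + 1)
      = (Nat.choose (2 * N + 1) N : ℚ) * (2 * N + 2) := by
    have e3 := Nat.add_one_mul_choose_eq (2 * N + 1) N
    have h1 : 2 * (N + 1) = (2 * N + 1) + 1 := by ring
    have e3' := congrArg (fun x : ℕ => (x : ℚ)) e3
    push_cast at e3' ⊢
    rw [h1]
    push_cast at *
    linarith [e3']
  have hNN : (Nat.choose N N : ℚ) = 1 := by simp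
  have hN0 : (Nat.choose N 0 : ℚ) = 1 := by simp
  have hNN1 : (Nat.choose (N + 1) (N + 1) : ℚ) = 1 := by simp
  have hlast : ((N : ℚ) + 1 + 1) / 3 * (Nat.choose (2 * (N + 1) + 1) (N + 1) : ℚ) *
        (1 / (((N : ℚ) + 1) ^ 2 * (Nat.choose (N + 1) (N + 1) : ℚ) ^ 2))
      = (Nat.choose (2 * N + 1) N : ℚ) * (2 * (2 * N + 3)) / (3 * ((N : ℚ) + 1) ^ 2) := by
    rw [hNN1]
    have hC' : (Nat.choose (2 * (N + 1) + 1) (N + 1) : ℚ)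
        = (Nat.choose (2 * N + 1) N : ℚ) * (2 * N + 2) * (2 * N + 3)
            / (((N : ℚ) + 1) * ((N : ℚ) + 2)) := by
      rw [eq_div_iff (by positivity)]; linarith [a3]
    rw [hC']
    field_simp
    ring
  have hDval : (Nat.choose (2 * (N + 1)) (N + 1) : ℚ) / ((N : ℚ) + 1)
      = (Nat.choose (2 * N + 1) N : ℚ) * (2 * N + 2) / ((N : ℚ) + 1) ^ 2 := by
    rw [div_eq_div_iff hN1 (by positivity)]
    nlinarith [hD]
  have hHN : stH N N = (Nat.choose (2 * N + 1) N : ℚ) * (2 * (N : ℚ) - 3 * N - 3) /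
      (3 * ((N : ℚ) + 1) ^ 2) := by rw [stH, hNN]; ring_nf
  have hH0 : stH N 0 = (Nat.choose (2 * N + 1) N : ℚ) * (- 3 * (N : ℚ) - 3) /
      (3 * ((N : ℚ) + 1) ^ 2) := by rw [stH, hN0]; push_cast; ring_nf
  rw [hlast, hDval]
  rw [show ((N : ℚ) + 1 + 1) / 3 * (Nat.choose (2 * (N + 1) + 1) (N + 1) : ℚ) *
        ∑ i ∈ Finset.range N, (1 / (((i : ℚ) + 1) ^ 2 * (Nat.choose (N + 1) (i + 1) : ℚ) ^ 2))
      = stH N N - stH N 0 + ((N : ℚ) + 1) / 3 * (Nat.choose (2 * N + 1) N : ℚ) *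
          ∑ i ∈ Finset.range N, (1 / (((i : ℚ) + 1) ^ 2 * (Nat.choose N (i + 1) : ℚ) ^ 2))
      from by linarith [hsum]]
  rw [hHN, hH0]
  field_simp
  ring

lemma staver_aux (N : ℕ) :
    ∑ k ∈ Finset.Icc 1 N, (Nat.choose (2 * k) k : ℚ) / k =
      ((N : ℚ) + 1) / 3 * Nat.choose (2 * N + 1) N *
        ∑ k ∈ Finset.Icc 1 N, 1 / ((k : ℚ) ^ 2 * (Nat.choose N k : ℚ) ^ 2) := by
  induction N with
  | zero => simp
  | succ n ih =>
      rw [Finset.sum_Icc_succ_top (by omega : 1 ≤ n + 1), ih]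
      have hstep := staver_step n
      push_cast at hstep ⊢
      have hD : ((Nat.choose (2 * (n + 1)) (n + 1) : ℚ)) / ((n : ℚ) + 1) =
          (Nat.choose (2 * (n + 1)) (n + 1) : ℚ) / ((n : ℚ) + 1) := rfl
      linarith [hstep]

theorem staver (N : ℕ) (hN : 0 < N) :
    ∑ k ∈ Finset.Icc 1 N, (Nat.choose (2 * k) k : ℚ) / k =
      ((N : ℚ) + 1) / 3 * Nat.choose (2 * N + 1) N *
        ∑ k ∈ Finset.Icc 1 N, 1 / ((k : ℚ) ^ 2 * (Nat.choose N k : ℚ) ^ 2) := by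
  exact staver_aux N
end

section
/- For all nonnegative real numbers x and y, ⌊2x+2y⌋ + ⌊y⌋ ≥ ⌊x⌋ + ⌊x+y⌋ + ⌊2y⌋, where ⌊·⌋ is the floor function. -/
open Polynomial Finset

theorem floor_ineq (x y : ℝ) (hx : 0 ≤ x) (hy : 0 ≤ y) :
    ⌊x⌋ + ⌊x + y⌋ + ⌊2 * y⌋ ≤ ⌊2 * x + 2 * y⌋ + ⌊y⌋ := by
  have key : ∀ a b : ℝ, 0 ≤ a → a < 1 → 0 ≤ b → b < 1 →
      ⌊a + b⌋ + ⌊2 * b⌋ ≤ ⌊2 * a + 2 * b⌋ := by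
    intro a b ha ha1 hb hb1
    rcases lt_or_ge b (1/2) with h | h
    · have h2b : ⌊(2:ℝ) * b⌋ = 0 := by
        rw [Int.floor_eq_zero_iff]; constructor <;> [positivity; linarith]
      rw [h2b]
      simpa using Int.floor_le_floor (R := ℝ) (by linarith : a + b ≤ 2 * a + 2 * b)
    · rcases lt_or_ge (a + b) 1 with h1 | h1
      · have hab : ⌊a + b⌋ = 0 := by
          rw [Int.floor_eq_zero_iff]; constructor <;> [positivity; linarith]
        have h2b : ⌊(2:ℝ) * b⌋ = 1 := by
          rw [Int.floor_eq_iff]; push_cast; constructor <;> linarith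
        have : (1:ℤ) ≤ ⌊2 * a + 2 * b⌋ := by
          rw [Int.le_floor]; push_cast; linarith
        omega
      · have hab : ⌊a + b⌋ = 1 := by
          rw [Int.floor_eq_iff]; push_cast; constructor <;> linarith
        have h2b : ⌊(2:ℝ) * b⌋ ≤ 1 := by
          rw [Int.floor_le_iff]; push_cast; linarith
        have : (2:ℤ) ≤ ⌊2 * a + 2 * b⌋ := by
          rw [Int.le_floor]; push_cast; linarith
        omega
  have hx' := Int.floor_add_fract x
  have hy' := Int.floor_add_fract y
  have ha := Int.fract_nonneg x
  have ha1 := Int.fract_lt_one x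
  have hb := Int.fract_nonneg y
  have hb1 := Int.fract_lt_one y
  have hk := key (Int.fract x) (Int.fract y) ha ha1 hb hb1
  have e1 : ⌊x + y⌋ = ⌊x⌋ + ⌊y⌋ + ⌊Int.fract x + Int.fract y⌋ := by
    conv_lhs => rw [← hx', ← hy']
    rw [show (↑⌊x⌋ + Int.fract x) + (↑⌊y⌋ + Int.fract y)
        = (↑(⌊x⌋ + ⌊y⌋) : ℝ) + (Int.fract x + Int.fract y) by push_cast; ring,
      Int.floor_intCast_add]
  have e2 : ⌊2 * y⌋ = 2 * ⌊y⌋ + ⌊2 * Int.fract y⌋ := by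
    conv_lhs => rw [← hy']
    rw [show (2:ℝ) * (↑⌊y⌋ + Int.fract y) = (↑(2 * ⌊y⌋) : ℝ) + 2 * Int.fract y by
      push_cast; ring, Int.floor_intCast_add]
  have e3 : ⌊2 * x + 2 * y⌋ = 2 * ⌊x⌋ + 2 * ⌊y⌋ + ⌊2 * Int.fract x + 2 * Int.fract y⌋ := by
    conv_lhs => rw [← hx', ← hy']
    rw [show (2:ℝ) * (↑⌊x⌋ + Int.fract x) + 2 * (↑⌊y⌋ + Int.fract y)
        = (↑(2 * ⌊x⌋ + 2 * ⌊y⌋) : ℝ) + (2 * Int.fract x + 2 * Int.fract y) by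
      push_cast; ring, Int.floor_intCast_add]
  omega
end

section
/- For every positive integer m, binom_q(2m-1, m-1) ≡ (-1)^{m-1} q^{C(m,2)} (mod Φ_m(q)^2), as polynomials in ℤ[q]. -/
open Polynomial Finset

private lemma derivFinsetProd {ι : Type*} [DecidableEq ι] (s : Finset ι) (f : ι → Polynomial ℚ) :
    derivative (∏ i ∈ s, f i) = ∑ i ∈ s, (∏ j ∈ s.erase i, f j) * derivative (f i) := by
  induction s using Finset.induction_on with
  | empty => simp
  | @insert a s ha ih =>
    rw [Finset.prod_insert ha, derivative_mul, ih, Finset.sum_insert ha, Finset.erase_insert ha,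
      Finset.mul_sum]
    have h : ∀ i ∈ s, (∏ j ∈ (insert a s).erase i, f j) * derivative (f i)
        = f a * ((∏ j ∈ s.erase i, f j) * derivative (f i)) := by
      intro i hi
      have hia : a ≠ i := fun h => ha (h ▸ hi)
      rw [Finset.erase_insert_of_ne hia, Finset.prod_insert (fun h => ha (Finset.mem_of_mem_erase h)), mul_assoc]
    rw [Finset.sum_congr rfl h, mul_comm]

private lemma sq_dvd_of_deriv {p F : Polynomial ℚ} (hp : IsCoprime p (derivative p))
    (h1 : p ∣ F) (h2 : p ∣ derivative F) : p ^ 2 ∣ F := by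
  obtain ⟨G, rfl⟩ := h1
  rw [derivative_mul] at h2
  have h3 : p ∣ derivative p * G := (dvd_add_right (dvd_mul_right p (derivative G))).mp (by rwa [add_comm] at h2)
  have h4 : p ∣ G := hp.dvd_of_dvd_mul_left h3
  rw [pow_two]
  exact mul_dvd_mul_left p h4

private lemma one_sub_X_pow_ne_zero (n : ℕ) : (1 - X ^ (n+1) : Polynomial ℚ) ≠ 0 := by
  intro h
  have := congrArg (fun p => Polynomial.coeff p (n+1)) h
  simp [coeff_one, coeff_X_pow] at this

private lemma congrMod_helper (x y : RatFunc ℚ) (p a b : Polynomial ℚ) (hp : Irreducible p)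
    (hb : ¬ p ∣ b) (hb0 : b ≠ 0)
    (h : (x - y) * algebraMap (Polynomial ℚ) (RatFunc ℚ) b = algebraMap (Polynomial ℚ) (RatFunc ℚ) a)
    (ha : p ^ 2 ∣ a) : (p ^ 2 ∣ (x - y).num) ∧ IsCoprime ((x - y).denom) (p ^ 2) := by
  set d := x - y with hd
  have hden0 : (algebraMap (Polynomial ℚ) (RatFunc ℚ)) d.denom ≠ 0 :=
    RatFunc.algebraMap_ne_zero (RatFunc.denom_ne_zero d)
  have hcross : d.num * b = a * d.denom := by
    apply RatFunc.algebraMap_injective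
    have h2 : (algebraMap (Polynomial ℚ) (RatFunc ℚ) d.num / algebraMap (Polynomial ℚ) (RatFunc ℚ) d.denom)
        * algebraMap (Polynomial ℚ) (RatFunc ℚ) b = algebraMap (Polynomial ℚ) (RatFunc ℚ) a := by
      rw [RatFunc.num_div_denom]; exact h
    rw [div_mul_eq_mul_div, div_eq_iff hden0] at h2
    rw [map_mul, map_mul]; exact h2
  have hprime : Prime p := hp.prime
  have hpd : ¬ p ∣ d.denom := by
    intro hpd
    have hdvd : d.denom ∣ d.num * b := ⟨a, by linear_combination hcross⟩
    have : d.denom ∣ b := (RatFunc.isCoprime_num_denom d).symm.dvd_of_dvd_mul_left hdvd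
    exact hb (hpd.trans this)
  constructor
  · exact hprime.pow_dvd_of_dvd_mul_right 2 hb (hcross ▸ ha.mul_right d.denom)
  · exact ((hp.coprime_iff_not_dvd.mpr hpd).pow_left).symm

private noncomputable def PP (m : ℕ) (ζ : ℂ) : ℂ := ∏ j ∈ Finset.range (m-1), (1 - ζ^(j+1))
private noncomputable def QQ (m : ℕ) (ζ : ℂ) (j : ℕ) : ℂ :=
  ∏ k ∈ (Finset.range (m-1)).erase j, (1 - ζ^(k+1))

section cx
variable {m : ℕ} {ζ : ℂ}

private lemma w_ne (hζ : IsPrimitiveRoot ζ m) (j : ℕ) (hj : j ∈ Finset.range (m-1)) : (1 - ζ^(j+1)) ≠ 0 := by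
  rw [Finset.mem_range] at hj
  intro h
  have h1 : ζ ^ (j+1) = 1 := by linear_combination -h
  rw [hζ.pow_eq_one_iff_dvd] at h1
  have := Nat.le_of_dvd (by omega) h1
  omega

private lemma PP_ne (hm : 2 ≤ m) (hζ : IsPrimitiveRoot ζ m) : PP m ζ ≠ 0 :=
  Finset.prod_ne_zero_iff.mpr (w_ne hζ)

private lemma QQ_w (hζ : IsPrimitiveRoot ζ m) (j : ℕ) (hj : j ∈ Finset.range (m-1)) :
    QQ m ζ j * (1 - ζ^(j+1)) = PP m ζ :=
  Finset.prod_erase_mul _ _ hj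

private lemma sum_helper (hm : 2 ≤ m) : ∑ j ∈ Finset.range (m-1), (m-1-j) = m*(m-1)/2 := by
  have h2c : 2 * (m*(m-1)/2) = m * (m-1) := by
    have he : 2 ∣ m * (m-1) := by
      rcases Nat.even_or_odd m with h | h
      · exact Dvd.dvd.mul_right h.two_dvd _
      · exact Dvd.dvd.mul_left (Nat.Odd.sub_odd h odd_one).two_dvd _
    omega
  have h2 : ∑ j ∈ Finset.range (m-1), (m-1-j) = ∑ j ∈ Finset.range (m-1), (j+1) := by
    calc ∑ j ∈ Finset.range (m-1), (m-1-j)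
        = ∑ j ∈ Finset.range (m-1), ((m-1-1-j)+1) :=
          Finset.sum_congr rfl (by intro j hj; rw [Finset.mem_range] at hj; omega)
      _ = ∑ j ∈ Finset.range (m-1), (j+1) := Finset.sum_range_reflect (fun j => j+1) (m-1)
  have h1 : (∑ j ∈ Finset.range (m-1), (m-1-j)) + ∑ j ∈ Finset.range (m-1), (j+1)
      = ∑ _j ∈ Finset.range (m-1), m := by
    rw [← Finset.sum_add_distrib]
    exact Finset.sum_congr rfl (by intro j hj; rw [Finset.mem_range] at hj; omega)
  have h3 : ∑ _j ∈ Finset.range (m-1), m = (m-1) * m := by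
    rw [Finset.sum_const, Finset.card_range, smul_eq_mul]
  have h4 : (∑ j ∈ Finset.range (m-1), (m-1-j)) + (∑ j ∈ Finset.range (m-1), (m-1-j))
      = 2 * (m*(m-1)/2) := by
    rw [h2c]
    calc (∑ j ∈ Finset.range (m-1), (m-1-j)) + (∑ j ∈ Finset.range (m-1), (m-1-j))
        = (∑ j ∈ Finset.range (m-1), (m-1-j)) + ∑ j ∈ Finset.range (m-1), (j+1) := by rw [h2]
      _ = (m-1) * m := by rw [h1, h3]
      _ = m * (m-1) := Nat.mul_comm _ _
  omega

private lemma key1 (hm : 2 ≤ m) (hζ : IsPrimitiveRoot ζ m) : (-1:ℂ)^(m-1) * ζ^(m*(m-1)/2) = 1 := by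
  have hζm : ζ ^ m = 1 := hζ.pow_eq_one
  have hrefl : PP m ζ = ((-1:ℂ)^(m-1) * ζ^(m*(m-1)/2)) * PP m ζ := by
    conv_lhs => rw [PP, ← Finset.prod_range_reflect (fun j => 1 - ζ^(j+1)) (m-1)]
    have hstep : ∀ j ∈ Finset.range (m-1),
        (1 - ζ^((m-1-1-j)+1)) = (-ζ^(m-1-j)) * (1 - ζ^(j+1)) := by
      intro j hj
      rw [Finset.mem_range] at hj
      have e1 : m-1-1-j+1 = m-1-j := by omega
      have e2 : (m-1-j) + (j+1) = m := by omega
      have h1 : ζ^(m-1-j) * ζ^(j+1) = 1 := by rw [← pow_add, e2, hζm]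
      rw [e1]
      linear_combination -h1
    rw [Finset.prod_congr rfl hstep, Finset.prod_mul_distrib]
    congr 1
    have : ∀ j ∈ Finset.range (m-1), (-ζ^(m-1-j)) = (-1) * ζ^(m-1-j) := by intros; ring
    rw [Finset.prod_congr rfl this, Finset.prod_mul_distrib, Finset.prod_const,
      Finset.card_range, Finset.prod_pow_eq_pow_sum, sum_helper hm]
  have h5 : (1 - (-1:ℂ)^(m-1) * ζ^(m*(m-1)/2)) * PP m ζ = 0 := by linear_combination hrefl
  rcases mul_eq_zero.mp h5 with h | h
  · linear_combination -h
  · exact absurd h (PP_ne hm hζ)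

private lemma QQ_pair (hm : 2 ≤ m) (hζ : IsPrimitiveRoot ζ m) (j : ℕ) (hj : j ∈ Finset.range (m-1)) :
    QQ m ζ j + QQ m ζ (m-1-1-j) = PP m ζ := by
  have hζm : ζ ^ m = 1 := hζ.pow_eq_one
  rw [Finset.mem_range] at hj
  have hj' : m-1-1-j ∈ Finset.range (m-1) := by rw [Finset.mem_range]; omega
  have hwj := w_ne hζ j (Finset.mem_range.mpr hj)
  have hwj' := w_ne hζ _ hj'
  have hmul : ζ^(j+1) * ζ^((m-1-1-j)+1) = 1 := by
    rw [← pow_add, show (j+1)+((m-1-1-j)+1) = m by omega, hζm]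
  apply mul_right_cancel₀ (mul_ne_zero hwj hwj')
  calc (QQ m ζ j + QQ m ζ (m-1-1-j)) * ((1 - ζ^(j+1)) * (1 - ζ^((m-1-1-j)+1)))
      = (QQ m ζ j * (1 - ζ^(j+1))) * (1 - ζ^((m-1-1-j)+1))
        + (QQ m ζ (m-1-1-j) * (1 - ζ^((m-1-1-j)+1))) * (1 - ζ^(j+1)) := by ring
    _ = PP m ζ * (1 - ζ^((m-1-1-j)+1)) + PP m ζ * (1 - ζ^(j+1)) := by
        rw [QQ_w hζ j (Finset.mem_range.mpr hj), QQ_w hζ _ hj']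
    _ = PP m ζ * ((1 - ζ^(j+1)) * (1 - ζ^((m-1-1-j)+1))) := by linear_combination (-(PP m ζ)) * hmul

private lemma sum_QQ (hm : 2 ≤ m) (hζ : IsPrimitiveRoot ζ m) : 2 * ∑ j ∈ Finset.range (m-1), QQ m ζ j = ((m-1 : ℕ) : ℂ) * PP m ζ := by
  have hrefl : ∑ j ∈ Finset.range (m-1), QQ m ζ (m-1-1-j) = ∑ j ∈ Finset.range (m-1), QQ m ζ j :=
    Finset.sum_range_reflect (fun j => QQ m ζ j) (m-1)
  calc 2 * ∑ j ∈ Finset.range (m-1), QQ m ζ j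
      = (∑ j ∈ Finset.range (m-1), QQ m ζ j) + ∑ j ∈ Finset.range (m-1), QQ m ζ (m-1-1-j) := by
        rw [hrefl]; ring
    _ = ∑ j ∈ Finset.range (m-1), (QQ m ζ j + QQ m ζ (m-1-1-j)) := by rw [← Finset.sum_add_distrib]
    _ = ∑ _j ∈ Finset.range (m-1), PP m ζ := Finset.sum_congr rfl (fun j hj => QQ_pair hm hζ j hj)
    _ = ((m-1 : ℕ) : ℂ) * PP m ζ := by rw [Finset.sum_const, Finset.card_range, nsmul_eq_mul]

private lemma sum_QQz (hm : 2 ≤ m) (hζ : IsPrimitiveRoot ζ m) : ∑ j ∈ Finset.range (m-1), QQ m ζ j * ζ^(j+1)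
    = (∑ j ∈ Finset.range (m-1), QQ m ζ j) - ((m-1 : ℕ) : ℂ) * PP m ζ := by
  calc ∑ j ∈ Finset.range (m-1), QQ m ζ j * ζ^(j+1)
      = ∑ j ∈ Finset.range (m-1), (QQ m ζ j - PP m ζ) := by
        apply Finset.sum_congr rfl
        intro j hj
        linear_combination -(QQ_w hζ j hj)
    _ = _ := by rw [Finset.sum_sub_distrib, Finset.sum_const, Finset.card_range, nsmul_eq_mul]

end cx

set_option maxHeartbeats 1000000 in
private lemma key_dvd (m : ℕ) (hm : 0 < m) :
    (cyclotomic m ℚ) ^ 2 ∣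
      ((∏ j ∈ Finset.range (m-1), (1 - (X:Polynomial ℚ) ^ (m+j+1)))
        - C ((-1:ℚ) ^ (m-1)) * X ^ (m*(m-1)/2)
          * ∏ j ∈ Finset.range (m-1), (1 - (X:Polynomial ℚ) ^ (j+1))) := by
  rcases eq_or_lt_of_le (show 1 ≤ m from hm) with h1 | hm2
  · have hm1 : m = 1 := h1.symm
    subst hm1
    simp
  · have hm2' : 2 ≤ m := hm2
    set c := m*(m-1)/2 with hcdef
    have h2c : 2 * c = m * (m-1) := by
      have he : 2 ∣ m * (m-1) := by
        rcases Nat.even_or_odd m with h | h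
        · exact Dvd.dvd.mul_right h.two_dvd _
        · exact Dvd.dvd.mul_left (Nat.Odd.sub_odd h odd_one).two_dvd _
      omega
    have hc1 : 1 ≤ c := by
      rcases Nat.eq_zero_or_pos c with h | h
      · rw [h, Nat.mul_zero] at h2c
        rcases Nat.mul_eq_zero.mp h2c.symm with h' | h' <;> omega
      · exact h
    set ζ : ℂ := Complex.exp (2 * Real.pi * Complex.I / m) with hζdef
    have hζ : IsPrimitiveRoot ζ m := Complex.isPrimitiveRoot_exp m hm.ne'
    have hζm : ζ ^ m = 1 := hζ.pow_eq_one
    have hζ0 : ζ ≠ 0 := Complex.exp_ne_zero _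
    have hirr : Irreducible (cyclotomic m ℚ) := cyclotomic.irreducible_rat hm
    have hmin : cyclotomic m ℚ = minpoly ℚ ζ := cyclotomic_eq_minpoly_rat hζ hm
    have hdvd : ∀ f : Polynomial ℚ, (aeval ζ) f = 0 → cyclotomic m ℚ ∣ f := by
      intro f hf; rw [hmin]; exact minpoly.dvd ℚ ζ hf
    have haevalG : (aeval ζ) (∏ j ∈ Finset.range (m-1), (1 - (X:Polynomial ℚ) ^ (m+j+1)))
        = PP m ζ := by
      rw [map_prod, PP]
      apply Finset.prod_congr rfl
      intro j hj
      rw [map_sub, map_one, map_pow, aeval_X, show m+j+1 = m+(j+1) from rfl, pow_add, hζm,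
        one_mul]
    have haevalB : (aeval ζ) (∏ j ∈ Finset.range (m-1), (1 - (X:Polynomial ℚ) ^ (j+1)))
        = PP m ζ := by
      rw [map_prod, PP]
      exact Finset.prod_congr rfl fun j hj => by rw [map_sub, map_one, map_pow, aeval_X]
    have haevalR : (aeval ζ) (C ((-1:ℚ) ^ (m-1)) * (X:Polynomial ℚ) ^ c) = 1 := by
      rw [map_mul, aeval_C, aeval_X_pow, map_pow, map_neg, map_one]
      exact key1 hm2' hζ
    apply sq_dvd_of_deriv hirr.separable
    · apply hdvd
      rw [map_sub, map_mul, haevalG, haevalB, haevalR, one_mul, sub_self]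
    · apply hdvd
      rw [derivative_sub, derivative_mul, derivative_C_mul, derivative_X_pow]
      have hdG : (aeval ζ) (derivative (∏ j ∈ Finset.range (m-1),
            (1 - (X:Polynomial ℚ) ^ (m+j+1))))
          = ∑ j ∈ Finset.range (m-1), QQ m ζ j * (-(((m:ℂ)+j+1) * ζ^j)) := by
        rw [derivFinsetProd, map_sum]
        apply Finset.sum_congr rfl
        intro j hj
        rw [map_mul]
        congr 1
        · rw [map_prod, QQ]
          apply Finset.prod_congr rfl
          intro k hk
          rw [map_sub, map_one, map_pow, aeval_X, show m+k+1 = m+(k+1) from rfl, pow_add, hζm,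
            one_mul]
        · rw [derivative_sub, derivative_one, derivative_X_pow, zero_sub, map_neg, map_mul,
            aeval_C, map_pow, aeval_X, show m+j+1-1 = m+j from rfl, pow_add, hζm, one_mul,
            map_natCast]
          push_cast
          ring
      have hdB : (aeval ζ) (derivative (∏ j ∈ Finset.range (m-1),
            (1 - (X:Polynomial ℚ) ^ (j+1))))
          = ∑ j ∈ Finset.range (m-1), QQ m ζ j * (-(((j:ℂ)+1) * ζ^j)) := by
        rw [derivFinsetProd, map_sum]
        apply Finset.sum_congr rfl
        intro j hj
        rw [map_mul]
        congr 1
        · rw [map_prod, QQ]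
          exact Finset.prod_congr rfl fun k hk => by rw [map_sub, map_one, map_pow, aeval_X]
        · rw [derivative_sub, derivative_one, derivative_X_pow, zero_sub, map_neg, map_mul,
            aeval_C, map_pow, aeval_X, show j+1-1 = j from rfl, map_natCast]
          push_cast
          ring
      have haevalR' : (aeval ζ) (C ((-1:ℚ) ^ (m-1)) * (C ((c:ℕ):ℚ) * (X:Polynomial ℚ) ^ (c-1)))
          = (-1:ℂ)^(m-1) * (((c:ℕ):ℂ) * ζ^(c-1)) := by
        rw [map_mul, map_mul, aeval_C, aeval_C, aeval_X_pow, map_pow, map_neg, map_one,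
          map_natCast]
      rw [map_sub, map_add, map_mul, haevalR', haevalB, map_mul, haevalR, hdG, hdB]
      -- now a pure complex identity
      have hsplit : ∑ j ∈ Finset.range (m-1), QQ m ζ j * (-(((m:ℂ)+j+1) * ζ^j))
          = (∑ j ∈ Finset.range (m-1), QQ m ζ j * (-(((j:ℂ)+1) * ζ^j)))
            + (-(m:ℂ)) * ∑ j ∈ Finset.range (m-1), QQ m ζ j * ζ^j := by
        rw [Finset.mul_sum, ← Finset.sum_add_distrib]
        exact Finset.sum_congr rfl fun j hj => by ring
      have hTz : ζ * (∑ j ∈ Finset.range (m-1), QQ m ζ j * ζ^j)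
          = ∑ j ∈ Finset.range (m-1), QQ m ζ j * ζ^(j+1) := by
        rw [Finset.mul_sum]
        exact Finset.sum_congr rfl fun j hj => by ring
      have hzc : ζ * ζ^(c-1) = ζ^c := by
        rw [← pow_succ', Nat.sub_add_cancel hc1]
      have hDP : ((-1:ℂ)^(m-1) * (((c:ℕ):ℂ) * ζ^(c-1)) * PP m ζ) * ζ = ((c:ℕ):ℂ) * PP m ζ := by
        have h9 : (-1:ℂ)^(m-1) * (ζ * ζ^(c-1)) = 1 := by rw [hzc]; exact key1 hm2' hζ
        linear_combination (((c:ℕ):ℂ) * PP m ζ) * h9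
      have hmc : ((m-1 : ℕ) : ℂ) = (m:ℂ) - 1 := by
        rw [Nat.cast_sub hm]; norm_num
      have h2c' : 2 * ((c:ℕ):ℂ) = (m:ℂ) * ((m:ℂ) - 1) := by
        rw [← hmc]
        exact_mod_cast congrArg (Nat.cast : ℕ → ℂ) h2c
      have hz : ζ * ((∑ j ∈ Finset.range (m-1), QQ m ζ j * (-(((m:ℂ)+j+1) * ζ^j)))
          - ((-1:ℂ)^(m-1) * (((c:ℕ):ℂ) * ζ^(c-1)) * PP m ζ
             + 1 * ∑ j ∈ Finset.range (m-1), QQ m ζ j * (-(((j:ℂ)+1) * ζ^j)))) = 0 := by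
        linear_combination ζ * hsplit + (-(m:ℂ)) * hTz + (-(m:ℂ)) * (sum_QQz hm2' hζ)
          + (-(m:ℂ)/2) * (sum_QQ hm2' hζ) + (-1 : ℂ) * hDP + (-(PP m ζ)/2) * h2c'
          + ((m:ℂ)/2 * PP m ζ) * hmc
      exact (mul_eq_zero.mp hz).resolve_left hζ0
theorem q_central_binom_congr (m : ℕ) (hm : 0 < m) :
    congrMod (qbin q (2 * m - 1) (m - 1)) ((-1) ^ (m - 1) * q ^ (C2 (m : ℤ)))
      (Polynomial.cyclotomic m ℚ ^ 2) := by
  set c := m*(m-1)/2 with hcdef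
  have h2c : 2 * c = m * (m-1) := by
    have he : 2 ∣ m * (m-1) := by
      rcases Nat.even_or_odd m with h | h
      · exact Dvd.dvd.mul_right h.two_dvd _
      · exact Dvd.dvd.mul_left (Nat.Odd.sub_odd h odd_one).two_dvd _
    omega
  have hq : q = algebraMap (Polynomial ℚ) (RatFunc ℚ) X := RatFunc.algebraMap_X.symm
  have hpoch : ∀ M : ℕ, qpoch q q M
      = algebraMap (Polynomial ℚ) (RatFunc ℚ) (∏ j ∈ Finset.range M, (1 - X^(j+1))) := by
    intro M
    rw [qpoch, map_prod]
    apply Finset.prod_congr rfl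
    intro j hj
    rw [hq, map_sub, map_one, map_pow, pow_succ']
  have hBpoly : (∏ j ∈ Finset.range (m-1), (1 - X^(j+1)) : Polynomial ℚ) ≠ 0 :=
    Finset.prod_ne_zero_iff.mpr (fun j _ => one_sub_X_pow_ne_zero j)
  have hCmpoly : (∏ j ∈ Finset.range m, (1 - X^(j+1)) : Polynomial ℚ) ≠ 0 :=
    Finset.prod_ne_zero_iff.mpr (fun j _ => one_sub_X_pow_ne_zero j)
  have hBne : algebraMap (Polynomial ℚ) (RatFunc ℚ) (∏ j ∈ Finset.range (m-1), (1 - X^(j+1))) ≠ 0 :=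
    RatFunc.algebraMap_ne_zero hBpoly
  have hCmne : algebraMap (Polynomial ℚ) (RatFunc ℚ) (∏ j ∈ Finset.range m, (1 - X^(j+1))) ≠ 0 :=
    RatFunc.algebraMap_ne_zero hCmpoly
  have hA : (∏ j ∈ Finset.range (2*m-1), (1 - (X:Polynomial ℚ)^(j+1)))
      = (∏ j ∈ Finset.range m, (1 - X^(j+1))) * ∏ j ∈ Finset.range (m-1), (1 - X^(m+j+1)) := by
    rw [show 2*m-1 = m + (m-1) by omega, Finset.prod_range_add]
  have hqbin : qbin q (2*m-1) (m-1)
      = algebraMap (Polynomial ℚ) (RatFunc ℚ)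
          ((∏ j ∈ Finset.range m, (1 - X^(j+1))) * ∏ j ∈ Finset.range (m-1), (1 - X^(m+j+1)))
        / (algebraMap (Polynomial ℚ) (RatFunc ℚ) (∏ j ∈ Finset.range (m-1), (1 - X^(j+1)))
           * algebraMap (Polynomial ℚ) (RatFunc ℚ) (∏ j ∈ Finset.range m, (1 - X^(j+1)))) := by
    rw [qbin, if_pos (by omega : m-1 ≤ 2*m-1), hpoch, hpoch, hpoch,
      show 2*m-1-(m-1) = m by omega, hA]
  have hy : ((-1 : RatFunc ℚ))^(m-1) * q^(C2 (m:ℤ))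
      = algebraMap (Polynomial ℚ) (RatFunc ℚ) (C ((-1:ℚ)^(m-1)) * X^c) := by
    have h2cz : 2*(c:ℤ) = (m:ℤ)*((m:ℤ)-1) := by
      have h1 : ((m:ℤ)) - 1 = ((m-1:ℕ):ℤ) := by omega
      rw [h1]; exact_mod_cast h2c
    have hc2 : C2 (m:ℤ) = (c:ℤ) := by
      show ((m:ℤ) * ((m:ℤ)-1))/2 = (c:ℤ)
      rw [← h2cz, Int.mul_ediv_cancel_left _ two_ne_zero]
    rw [hc2, zpow_natCast, map_mul, map_pow, hq, map_pow, map_neg, map_one, map_pow, map_neg,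
      map_one]
  have hkey : (qbin q (2*m-1) (m-1) - ((-1 : RatFunc ℚ))^(m-1) * q^(C2 (m:ℤ)))
      * algebraMap (Polynomial ℚ) (RatFunc ℚ) (∏ j ∈ Finset.range (m-1), (1 - X^(j+1)))
      = algebraMap (Polynomial ℚ) (RatFunc ℚ)
          ((∏ j ∈ Finset.range (m-1), (1 - (X:Polynomial ℚ) ^ (m+j+1)))
            - C ((-1:ℚ) ^ (m-1)) * X ^ c
              * ∏ j ∈ Finset.range (m-1), (1 - (X:Polynomial ℚ) ^ (j+1))) := by
    rw [hqbin, hy, map_mul, map_sub, map_mul, map_mul]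
    have hdiv : ∀ (a b cc : RatFunc ℚ), cc ≠ 0 → b ≠ 0 → (cc * a) / (b * cc) = a / b := by
      intro a b cc hc hb
      field_simp
    rw [hdiv _ _ _ hCmne hBne, sub_mul, div_mul_cancel₀ _ hBne, map_mul]
  have hirr : Irreducible (cyclotomic m ℚ) := cyclotomic.irreducible_rat hm
  have hζ : IsPrimitiveRoot (Complex.exp (2 * Real.pi * Complex.I / m)) m :=
    Complex.isPrimitiveRoot_exp m hm.ne'
  have hmin : cyclotomic m ℚ = minpoly ℚ (Complex.exp (2 * Real.pi * Complex.I / m)) :=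
    cyclotomic_eq_minpoly_rat hζ hm
  have hnd : ¬ (cyclotomic m ℚ ∣ ∏ j ∈ Finset.range (m-1), (1 - X^(j+1))) := by
    intro hdvd
    obtain ⟨g, hg⟩ := hdvd
    have h0 : (aeval (Complex.exp (2 * Real.pi * Complex.I / m))) (cyclotomic m ℚ) = 0 := by
      rw [hmin]; exact minpoly.aeval ℚ _
    have h1 : (aeval (Complex.exp (2 * Real.pi * Complex.I / m)))
        (∏ j ∈ Finset.range (m-1), (1 - (X:Polynomial ℚ)^(j+1))) = 0 := by
      rw [hg, map_mul, h0, zero_mul]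
    rw [map_prod] at h1
    obtain ⟨j, hj, hj0⟩ := Finset.prod_eq_zero_iff.mp h1
    rw [map_sub, map_one, map_pow, aeval_X] at hj0
    exact w_ne hζ j hj hj0
  exact congrMod_helper _ _ _ _ _ hirr hnd hBpoly hkey (key_dvd m hm)
end
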